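/- arXiv:1404.6192 — 3 statements merged into one kernel-verified Lean document; each statement's English description precedes it below -/
import Mathlib

section
/- Let Λ = {λ_n} be a sequence with λ_n = n·γ_n where γ_n ≥ γ_{n+1} > 0 for all n ≥ 1. If Σ_{n=1}^∞ γ_n/n < ∞, then every 2π-periodic (in each variable) function f : ℝ² → ℝ of bounded partial Λ-variation (f ∈ PΛBV) has bounded harmonic variation (f ∈ HBV), i.e. PΛBV ⊆ HBV. -/
open scoped ENNReal BigOperators
open Filter Set

noncomputable section

/-- A collection of `n` pairwise nonoverlapping subintervals of `T = [0, 2π]`,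
given as pairs of endpoints. -/
def NonoverlapIcc (n : ℕ) (I : Fin n → ℝ × ℝ) : Prop :=
  (∀ i, 0 ≤ (I i).1 ∧ (I i).1 < (I i).2 ∧ (I i).2 ≤ 2 * Real.pi) ∧
    ∀ i j, i ≠ j → (I i).2 ≤ (I j).1 ∨ (I j).2 ≤ (I i).1

/-- `f : ℝ² → ℝ` (curried) is `2π`-periodic in each variable. -/
def Periodic2 (f : ℝ → ℝ → ℝ) : Prop :=
  ∀ x y : ℝ, f (x + 2 * Real.pi) y = f x y ∧ f x (y + 2 * Real.pi) = f x y

/-- `ΛV₁(f)`: partial `Λ`-variation in the first variable. -/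
def LamV1 (Λ : ℕ → ℝ) (f : ℝ → ℝ → ℝ) : ℝ≥0∞ :=
  ⨆ (y ∈ Icc (0:ℝ) (2 * Real.pi)) (n : ℕ) (I : Fin n → ℝ × ℝ) (_ : NonoverlapIcc n I),
    ENNReal.ofReal (∑ i, |f (I i).2 y - f (I i).1 y| / Λ ((i : ℕ) + 1))

/-- `ΛV₂(f)`: partial `Λ`-variation in the second variable. -/
def LamV2 (Λ : ℕ → ℝ) (f : ℝ → ℝ → ℝ) : ℝ≥0∞ :=
  ⨆ (x ∈ Icc (0:ℝ) (2 * Real.pi)) (m : ℕ) (J : Fin m → ℝ × ℝ) (_ : NonoverlapIcc m J),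
    ENNReal.ofReal (∑ j, |f x (J j).2 - f x (J j).1| / Λ ((j : ℕ) + 1))

/-- `ΛV₁,₂(f)`: mixed `Λ`-variation. -/
def LamV12 (Λ : ℕ → ℝ) (f : ℝ → ℝ → ℝ) : ℝ≥0∞ :=
  ⨆ (n : ℕ) (m : ℕ) (I : Fin n → ℝ × ℝ) (J : Fin m → ℝ × ℝ)
    (_ : NonoverlapIcc n I) (_ : NonoverlapIcc m J),
    ENNReal.ofReal (∑ i, ∑ j,
      |f (I i).1 (J j).1 - f (I i).1 (J j).2 - f (I i).2 (J j).1 + f (I i).2 (J j).2| /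
        (Λ ((i : ℕ) + 1) * Λ ((j : ℕ) + 1)))

/-- Total harmonic variation `HV(f) = HV₁(f) + HV₂(f) + HV₁,₂(f)` (with `λ_n = n`).
`f ∈ HBV` iff `HarmonicV f ≠ ⊤`. -/
def HarmonicV (f : ℝ → ℝ → ℝ) : ℝ≥0∞ :=
  LamV1 (fun n => (n : ℝ)) f + LamV2 (fun n => (n : ℝ)) f + LamV12 (fun n => (n : ℝ)) f

/-- `Λ#V₁(f)`. -/
def LamSharpV1 (Λ : ℕ → ℝ) (f : ℝ → ℝ → ℝ) : ℝ≥0∞ :=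
  ⨆ (n : ℕ) (I : Fin n → ℝ × ℝ) (y : Fin n → ℝ)
    (_ : NonoverlapIcc n I) (_ : ∀ i, y i ∈ Icc (0:ℝ) (2 * Real.pi)),
    ENNReal.ofReal (∑ i, |f (I i).2 (y i) - f (I i).1 (y i)| / Λ ((i : ℕ) + 1))

/-- `Λ#V₂(f)`. -/
def LamSharpV2 (Λ : ℕ → ℝ) (f : ℝ → ℝ → ℝ) : ℝ≥0∞ :=
  ⨆ (m : ℕ) (J : Fin m → ℝ × ℝ) (x : Fin m → ℝ)
    (_ : NonoverlapIcc m J) (_ : ∀ j, x j ∈ Icc (0:ℝ) (2 * Real.pi)),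
    ENNReal.ofReal (∑ j, |f (x j) (J j).2 - f (x j) (J j).1| / Λ ((j : ℕ) + 1))

/-- A collection of `n` pairwise nonoverlapping rectangles `[α,β] × [γ,δ] ⊆ T²`,
encoded as `((α, β), (γ, δ))`. -/
def NonoverlapRect (n : ℕ) (A : Fin n → (ℝ × ℝ) × (ℝ × ℝ)) : Prop :=
  (∀ k, 0 ≤ (A k).1.1 ∧ (A k).1.1 < (A k).1.2 ∧ (A k).1.2 ≤ 2 * Real.pi ∧
        0 ≤ (A k).2.1 ∧ (A k).2.1 < (A k).2.2 ∧ (A k).2.2 ≤ 2 * Real.pi) ∧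
    ∀ k l, k ≠ l →
      Disjoint (Ioo (A k).1.1 (A k).1.2 ×ˢ Ioo (A k).2.1 (A k).2.2)
        (Ioo (A l).1.1 (A l).1.2 ×ˢ Ioo (A l).2.1 (A l).2.2)

/-- `Λ*V(f)` of Dyachenko–Waterman. -/
def LamStarV (Λ : ℕ → ℝ) (f : ℝ → ℝ → ℝ) : ℝ≥0∞ :=
  ⨆ (n : ℕ) (A : Fin n → (ℝ × ℝ) × (ℝ × ℝ)) (_ : NonoverlapRect n A),
    ENNReal.ofReal (∑ k,
      |f (A k).1.1 (A k).2.1 - f (A k).1.1 (A k).2.2 -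
        f (A k).1.2 (A k).2.1 + f (A k).1.2 (A k).2.2| / Λ ((k : ℕ) + 1))

/-- Partial `p`-variation (first variable); with `Φ(u) = u^p`. -/
def PV1pow (p : ℝ) (f : ℝ → ℝ → ℝ) : ℝ≥0∞ :=
  ⨆ (y ∈ Icc (0:ℝ) (2 * Real.pi)) (n : ℕ) (I : Fin n → ℝ × ℝ) (_ : NonoverlapIcc n I),
    ENNReal.ofReal (∑ i, |f (I i).2 y - f (I i).1 y| ^ p)

/-- Partial `p`-variation (second variable). -/
def PV2pow (p : ℝ) (f : ℝ → ℝ → ℝ) : ℝ≥0∞ :=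
  ⨆ (x ∈ Icc (0:ℝ) (2 * Real.pi)) (m : ℕ) (J : Fin m → ℝ × ℝ) (_ : NonoverlapIcc m J),
    ENNReal.ofReal (∑ j, |f x (J j).2 - f x (J j).1| ^ p)

/-- `V#_{Φ,1}(f)` for the class `B#V_Φ`. -/
def PhiSharpV1 (Φ : ℝ → ℝ) (f : ℝ → ℝ → ℝ) : ℝ≥0∞ :=
  ⨆ (n : ℕ) (I : Fin n → ℝ × ℝ) (y : Fin n → ℝ)
    (_ : NonoverlapIcc n I) (_ : ∀ i, y i ∈ Icc (0:ℝ) (2 * Real.pi)),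
    ENNReal.ofReal (∑ i, Φ |f (I i).2 (y i) - f (I i).1 (y i)|)

/-- `V#_{Φ,2}(f)` for the class `B#V_Φ`. -/
def PhiSharpV2 (Φ : ℝ → ℝ) (f : ℝ → ℝ → ℝ) : ℝ≥0∞ :=
  ⨆ (m : ℕ) (J : Fin m → ℝ × ℝ) (x : Fin m → ℝ)
    (_ : NonoverlapIcc m J) (_ : ∀ j, x j ∈ Icc (0:ℝ) (2 * Real.pi)),
    ENNReal.ofReal (∑ j, Φ |f (x j) (J j).2 - f (x j) (J j).1|)

/-- Partial modulus of variation `v₁(n, f)`. -/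
def modV1 (f : ℝ → ℝ → ℝ) (n : ℕ) : ℝ≥0∞ :=
  ⨆ (y ∈ Icc (0:ℝ) (2 * Real.pi)) (I : Fin n → ℝ × ℝ) (_ : NonoverlapIcc n I),
    ENNReal.ofReal (∑ i, |f (I i).2 y - f (I i).1 y|)

/-- Partial modulus of variation `v₂(m, f)`. -/
def modV2 (f : ℝ → ℝ → ℝ) (m : ℕ) : ℝ≥0∞ :=
  ⨆ (x ∈ Icc (0:ℝ) (2 * Real.pi)) (J : Fin m → ℝ × ℝ) (_ : NonoverlapIcc m J),
    ENNReal.ofReal (∑ j, |f x (J j).2 - f x (J j).1|)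

/-- `v₁#(n, f)`. -/
def modSharpV1 (f : ℝ → ℝ → ℝ) (n : ℕ) : ℝ≥0∞ :=
  ⨆ (I : Fin n → ℝ × ℝ) (y : Fin n → ℝ)
    (_ : NonoverlapIcc n I) (_ : ∀ i, y i ∈ Icc (0:ℝ) (2 * Real.pi)),
    ENNReal.ofReal (∑ i, |f (I i).2 (y i) - f (I i).1 (y i)|)

/-- `v₂#(m, f)`. -/
def modSharpV2 (f : ℝ → ℝ → ℝ) (m : ℕ) : ℝ≥0∞ :=
  ⨆ (J : Fin m → ℝ × ℝ) (x : Fin m → ℝ)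
    (_ : NonoverlapIcc m J) (_ : ∀ j, x j ∈ Icc (0:ℝ) (2 * Real.pi)),
    ENNReal.ofReal (∑ j, |f (x j) (J j).2 - f (x j) (J j).1|)

/-- The shifted sequence `Λ_n = {λ_k}_{k=n}^∞`: its `i`-th member (`i ≥ 1`) is `λ_{n+i-1}`. -/
def ShiftSeq (Λ : ℕ → ℝ) (n : ℕ) : ℕ → ℝ := fun k => Λ (k + n - 1)

/-- The sequence `λ_n = n / log n` (for `n ≥ 2`; the value at `n ≤ 1` is irrelevant). -/
def nlogSeq : ℕ → ℝ := fun n => if n ≤ 1 then 1 else (n : ℝ) / Real.log n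

/-- Double Fourier coefficient
`f̂(m,n) = (1/(4π²)) ∫₀^{2π}∫₀^{2π} f(x,y) e^{-imx} e^{-iny} dx dy`. -/
def fCoef (f : ℝ → ℝ → ℝ) (m n : ℤ) : ℂ :=
  (4 * (Real.pi : ℂ) ^ 2)⁻¹ *
    ∫ x in (0:ℝ)..(2 * Real.pi), ∫ y in (0:ℝ)..(2 * Real.pi),
      (f x y : ℂ) * Complex.exp (-(Complex.I * (m : ℂ) * (x : ℂ))) *
        Complex.exp (-(Complex.I * (n : ℂ) * (y : ℂ)))

/-- Rectangular partial sum `S_{M,N}[f,(x,y)]` of the double Fourier series. -/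
def SRect (f : ℝ → ℝ → ℝ) (M N : ℕ) (x y : ℝ) : ℂ :=
  ∑ m ∈ Finset.Icc (-(M : ℤ)) (M : ℤ), ∑ n ∈ Finset.Icc (-(N : ℤ)) (N : ℤ),
    fCoef f m n * Complex.exp (Complex.I * (m : ℂ) * (x : ℂ)) *
      Complex.exp (Complex.I * (n : ℂ) * (y : ℂ))

/-- One-sided punctured neighborhood filter: from the right if `s = true`,
from the left if `s = false`. -/
def sideF (x : ℝ) (s : Bool) : Filter ℝ :=
  if s then nhdsWithin x (Ioi x) else nhdsWithin x (Iio x)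

/-- `HasQuadLim f x y s t L` means the open-quadrant limit of `f` at `(x,y)` from the
quadrant with horizontal direction `s` and vertical direction `t` exists and equals `L`
(e.g. `s = true, t = false` is `f(x+0, y-0)`). -/
def HasQuadLim (f : ℝ → ℝ → ℝ) (x y : ℝ) (s t : Bool) (L : ℝ) : Prop :=
  Tendsto (fun p : ℝ × ℝ => f p.1 p.2) ((sideF x s) ×ˢ (sideF y t)) (nhds L)

/-- Cesàro numbers `A_k^α = (α+1)(α+2)⋯(α+k)/k!`. -/
def AA (α : ℝ) : ℕ → ℝ
  | 0 => 1
  | k + 1 => AA α k * (α + ((k : ℝ) + 1)) / ((k : ℝ) + 1)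

/-- Cesàro `(C; α, β)` means of the double Fourier series of `f`. -/
def cesaro (f : ℝ → ℝ → ℝ) (α β : ℝ) (n m : ℕ) (x y : ℝ) : ℂ :=
  ((1 / (AA α n * AA β m) : ℝ) : ℂ) *
    ∑ i ∈ Finset.range (n + 1), ∑ j ∈ Finset.range (m + 1),
      ((AA (α - 1) (n - i) * AA (β - 1) (m - j) : ℝ) : ℂ) * SRect f i j x y

end

section GSaux
namespace GS
open Finset

noncomputable def gG (γ : ℕ → ℝ) (k : ℕ) : ℝ :=
  ∑ t ∈ Finset.range k, 1 / (((t : ℝ) + 1) * γ (t + 1))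

noncomputable def Db (t : ℕ) : ℝ := 2 * (1 + Real.log ((t : ℝ) + 1)) / ((t : ℝ) + 1)


lemma Db_pos (t : ℕ) : 0 < Db t := by
  unfold Db
  have : 0 ≤ Real.log ((t : ℝ) + 1) := Real.log_nonneg (by push_cast; linarith)
  positivity

lemma harmonic_le_log : ∀ t : ℕ, 1 ≤ t →
    ∑ i ∈ Finset.range t, 1 / ((i : ℝ) + 1) ≤ 1 + Real.log t := by
  intro t ht
  induction t with
  | zero => omega
  | succ n ih =>
    rcases Nat.lt_or_ge n 1 with h | h
    · interval_cases n
      simp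
    · have hstep : (1 : ℝ) / ((n : ℝ) + 1) ≤ Real.log ((n : ℝ) + 1) - Real.log n := by
        have hn : (0:ℝ) < n := by exact_mod_cast h
        have := Real.log_le_sub_one_of_pos (show (0:ℝ) < (n : ℝ)/((n:ℝ)+1) by positivity)
        rw [Real.log_div (by positivity) (by positivity)] at this
        have h2 : (n:ℝ)/((n:ℝ)+1) - 1 = -(1/((n:ℝ)+1)) := by field_simp; ring
        rw [h2] at this
        linarith
      rw [Finset.sum_range_succ]
      push_cast
      have := ih h
      linarith

lemma sum_sq_le (n : ℕ) :
    ∑ i ∈ Finset.range n, 1 / (((i : ℝ) + 1) * ((i : ℝ) + 1)) ≤ 2 - 2 / ((n : ℝ) + 1) := by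
  induction n with
  | zero => norm_num
  | succ n ih =>
    rw [Finset.sum_range_succ]
    have h1 : (0:ℝ) < (n:ℝ) + 1 := by positivity
    have h2 : (0:ℝ) < (n:ℝ) + 2 := by positivity
    have key : 1 / (((n : ℝ) + 1) * ((n : ℝ) + 1)) ≤ 2 / ((n:ℝ)+1) - 2/((n:ℝ)+2) := by
      rw [div_sub_div _ _ (ne_of_gt h1) (ne_of_gt h2), div_le_div_iff₀ (by positivity) (by positivity)]
      ring_nf
      nlinarith [sq_nonneg ((n:ℝ)+1)]
    push_cast
    have e : (n:ℝ)+1+1 = (n:ℝ)+2 := by ring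
    rw [e]
    linarith

lemma telescope_le (g : ℕ → ℝ) (hg : ∀ i, 0 ≤ g i) (t n : ℕ) :
    ∑ i ∈ Finset.range n, (g i - g (i + t)) ≤ ∑ i ∈ Finset.range t, g i := by
  have h2 : ∑ i ∈ Finset.range n, g (i + t) = ∑ i ∈ Finset.Ico t (n + t), g i := by
    rw [Finset.sum_Ico_eq_sum_range]
    simp [Nat.add_sub_cancel, add_comm]
  rw [Finset.sum_sub_distrib, h2]
  rcases le_or_gt n t with h | h
  · have : ∑ i ∈ Finset.range n, g i ≤ ∑ i ∈ Finset.range t, g i :=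
      Finset.sum_le_sum_of_subset_of_nonneg (Finset.range_subset_range.2 h) (fun i _ _ => hg i)
    have h0 : 0 ≤ ∑ i ∈ Finset.Ico t (n + t), g i := Finset.sum_nonneg fun i _ => hg i
    linarith
  · have hsplit : ∑ i ∈ Finset.range n, g i = ∑ i ∈ Finset.range t, g i + ∑ i ∈ Finset.Ico t n, g i := by
      rw [Finset.range_eq_Ico, ← Finset.sum_Ico_consecutive _ (Nat.zero_le t) h.le, ← Finset.range_eq_Ico]
    have hsub : ∑ i ∈ Finset.Ico t n, g i ≤ ∑ i ∈ Finset.Ico t (n + t), g i :=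
      Finset.sum_le_sum_of_subset_of_nonneg
        (Finset.Ico_subset_Ico le_rfl (by omega)) (fun i _ _ => hg i)
    linarith

lemma Dbound (t n : ℕ) :
    ∑ i ∈ Finset.range n, 1 / (((i : ℝ) + 1) * ((i : ℝ) + (t : ℝ) + 1)) ≤ Db t := by
  rcases Nat.eq_zero_or_pos t with rfl | ht
  · have := sum_sq_le n
    have h2 : (0:ℝ) < (n:ℝ)+1 := by positivity
    have : ∑ i ∈ Finset.range n, 1 / (((i : ℝ) + 1) * ((i : ℝ) + 1)) ≤ 2 := by
      have : (0:ℝ) ≤ 2/((n:ℝ)+1) := by positivity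
      linarith [sum_sq_le n]
    simpa [Db] using this
  · have htR : (1:ℝ) ≤ (t:ℝ) := by exact_mod_cast ht
    have key : ∀ i : ℕ, 1 / (((i : ℝ) + 1) * ((i : ℝ) + (t : ℝ) + 1)) =
        (1/(t:ℝ)) * (1/((i:ℝ)+1) - 1/(((i+t : ℕ):ℝ)+1)) := by
      intro i
      push_cast
      field_simp
      ring
    calc ∑ i ∈ Finset.range n, 1 / (((i : ℝ) + 1) * ((i : ℝ) + (t : ℝ) + 1))
        = (1/(t:ℝ)) * ∑ i ∈ Finset.range n, (1/((i:ℝ)+1) - 1/(((i+t:ℕ):ℝ)+1)) := by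
          rw [Finset.mul_sum]; exact Finset.sum_congr rfl fun i _ => key i
      _ ≤ (1/(t:ℝ)) * (1 + Real.log t) := by
          apply mul_le_mul_of_nonneg_left _ (by positivity)
          exact le_trans (telescope_le (fun i => 1/((i:ℝ)+1)) (fun i => by positivity) t n)
            (harmonic_le_log t ht)
      _ ≤ Db t := by
          unfold Db
          rw [div_mul_eq_mul_div, one_mul, div_le_div_iff₀ (by linarith) (by positivity)]
          have hlog : Real.log t ≤ Real.log ((t:ℝ)+1) :=
            Real.log_le_log (by linarith) (by linarith)
          have hlog0 : 0 ≤ Real.log t := Real.log_nonneg htR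
          nlinarith

lemma double_count (g : ℕ → ℝ) (hg : ∀ u, 0 ≤ g u) (S : ℕ) :
    ∑ s ∈ Finset.range S, g (s / 2) ≤ 2 * ∑ u ∈ Finset.range S, g u := by
  have key : ∀ U, ∑ s ∈ Finset.range (2 * U), g (s / 2) = 2 * ∑ u ∈ Finset.range U, g u := by
    intro U
    induction U with
    | zero => simp
    | succ U ih =>
      have h1 : 2 * (U + 1) = (2 * U + 1) + 1 := by ring
      rw [h1, Finset.sum_range_succ, Finset.sum_range_succ, ih, Finset.sum_range_succ]
      have e1 : (2 * U) / 2 = U := by omega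
      have e2 : (2 * U + 1) / 2 = U := by omega
      rw [e1, e2]
      ring
  calc ∑ s ∈ Finset.range S, g (s / 2) ≤ ∑ s ∈ Finset.range (2 * S), g (s / 2) := by
        apply Finset.sum_le_sum_of_subset_of_nonneg
          (Finset.range_subset_range.2 (by omega)) (fun s _ _ => hg _)
    _ = 2 * ∑ u ∈ Finset.range S, g u := key S

lemma sort_bound (K : ℕ) (d w : Fin K → ℝ) (hd : ∀ t, 0 ≤ d t)
    (hw : ∀ t, 0 ≤ w t) (hwa : ∀ s t : Fin K, s ≤ t → w t ≤ w s)
    (G : ℕ → ℝ) (hG : ∀ k, 1 ≤ k → 0 < G k) (W : ℝ)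
    (H : ∀ S : Finset (Fin K), ∀ v : ℝ, 0 ≤ v → (∀ j ∈ S, v ≤ d j) → v * G S.card ≤ W) :
    ∑ t, d t * w t ≤ ∑ t : Fin K, (W / G ((t : ℕ) + 1)) * w t := by
  classical
  set σ : Equiv.Perm (Fin K) := Tuple.sort d with hσ
  set τ : Equiv.Perm (Fin K) := Fin.revPerm.trans σ with hτ
  have hmon : Monotone (d ∘ σ) := Tuple.monotone_sort d
  have hτanti : ∀ s t : Fin K, s ≤ t → d (τ t) ≤ d (τ s) := by
    intro s t hst
    have : t.rev ≤ s.rev := Fin.rev_le_rev.2 hst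
    exact hmon this
  have key : ∀ t : Fin K, d (τ t) * G ((t : ℕ) + 1) ≤ W := by
    intro t
    have hcard : ((Finset.Iic t).image τ).card = (t : ℕ) + 1 := by
      rw [Finset.card_image_of_injective _ τ.injective, Fin.card_Iic]
    have := H ((Finset.Iic t).image τ) (d (τ t)) (hd _) ?_
    · rwa [hcard] at this
    · intro j hj
      rcases Finset.mem_image.1 hj with ⟨u, hu, rfl⟩
      exact hτanti u t (Finset.mem_Iic.1 hu)
  have step1 : ∑ t, d t * w t = ∑ t, d (τ t) * w (τ t) :=
    (Equiv.sum_comp τ (fun t => d t * w t)).symm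
  have hmono_dw : Monovary (fun t => d (τ t)) w := by
    intro i j hij
    have hji : j < i := by
      by_contra hcon
      push_neg at hcon
      exact absurd (hwa i j hcon) (not_le.2 hij)
    exact hτanti j i hji.le
  have step2 : ∑ t, d (τ t) * w (τ t) ≤ ∑ t, d (τ t) * w t := by
    have := hmono_dw.sum_mul_comp_perm_le_sum_mul (σ := τ)
    simpa using this
  have step3 : ∑ t, d (τ t) * w t ≤ ∑ t : Fin K, (W / G ((t : ℕ) + 1)) * w t := by
    apply Finset.sum_le_sum
    intro t _
    apply mul_le_mul_of_nonneg_right _ (hw t)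
    have hGpos := hG ((t : ℕ) + 1) (by omega)
    rw [le_div_iff₀ hGpos]
    exact key t
  linarith


section
variable {γ : ℕ → ℝ} (hγ : ∀ n, 1 ≤ n → 0 < γ (n + 1) ∧ γ (n + 1) ≤ γ n)
include hγ


lemma gamma_pos : ∀ k, 1 ≤ k → 0 < γ k := by
  intro k hk
  match k, hk with
  | 1, _ => exact (hγ 1 le_rfl).1.trans_le (hγ 1 le_rfl).2
  | (n+2), _ => exact (hγ (n+1) (by omega)).1

lemma gamma_anti : ∀ k l, 1 ≤ k → k ≤ l → γ l ≤ γ k := by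
  intro k l hk hkl
  induction hkl with
  | refl => exact le_rfl
  | @step m h ih => exact le_trans (hγ m (le_trans hk h)).2 ih

lemma gG_term_pos : ∀ t : ℕ, 0 < 1 / (((t : ℝ) + 1) * γ (t + 1)) := by
  intro t
  apply div_pos one_pos
  exact mul_pos (by positivity) (gamma_pos hγ (t+1) (by omega))

lemma gG_pos : ∀ k, 1 ≤ k → 0 < gG γ k := by
  intro k hk
  apply Finset.sum_pos (fun t _ => gG_term_pos hγ t)
  exact Finset.nonempty_range_iff.2 (by omega)

lemma gG_mono : Monotone (gG γ) := by
  intro a b hab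
  exact Finset.sum_le_sum_of_subset_of_nonneg (Finset.range_subset_range.2 hab)
    (fun t _ _ => (gG_term_pos hγ t).le)

lemma cond1 (k : ℕ) (hk : 1 ≤ k) :
    γ (2 * k + 1) ≤ 2 * ∑ n ∈ Finset.Ico k (2 * k), γ (n + 1) / ((n : ℝ) + 1) := by
  have hpos : 0 < γ (2 * k + 1) := gamma_pos hγ _ (by omega)
  have hterm : ∀ n ∈ Finset.Ico k (2 * k), γ (2 * k + 1) / (2 * (k : ℝ)) ≤ γ (n + 1) / ((n : ℝ) + 1) := by
    intro n hn
    rw [Finset.mem_Ico] at hn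
    have h1 : γ (2 * k + 1) ≤ γ (n + 1) := gamma_anti hγ (n + 1) (2 * k + 1) (by omega) (by omega)
    have h2 : ((n : ℝ) + 1) ≤ 2 * (k : ℝ) := by
      have : n + 1 ≤ 2 * k := by omega
      exact_mod_cast this
    have h3 : (0:ℝ) < (n : ℝ) + 1 := by positivity
    have h4 : (0:ℝ) < 2 * (k : ℝ) := by
      have : (0:ℝ) < (k:ℝ) := by exact_mod_cast hk
      linarith
    calc γ (2 * k + 1) / (2 * (k : ℝ)) ≤ γ (2 * k + 1) / ((n : ℝ) + 1) := by
          apply div_le_div_of_nonneg_left hpos.le h3 h2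
      _ ≤ γ (n + 1) / ((n : ℝ) + 1) := by gcongr
  have hsum : (k : ℝ) * (γ (2 * k + 1) / (2 * (k : ℝ))) ≤ ∑ n ∈ Finset.Ico k (2 * k), γ (n + 1) / ((n : ℝ) + 1) := by
    have := Finset.sum_le_sum hterm
    rwa [Finset.sum_const, Nat.card_Ico, nsmul_eq_mul, show 2 * k - k = k by omega] at this
  have hkR : (0:ℝ) < (k:ℝ) := by exact_mod_cast hk
  have : (k : ℝ) * (γ (2 * k + 1) / (2 * (k : ℝ))) = γ (2 * k + 1) / 2 := by
    field_simp
  rw [this] at hsum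
  linarith

lemma cond_chain (SG : ℝ)
    (hSG : ∀ U : ℕ, ∑ n ∈ Finset.Ico 1 U, γ (n + 1) / ((n : ℝ) + 1) ≤ SG) :
    ∀ U : ℕ, ∑ u ∈ Finset.range U, γ (2 ^ (u + 1) + 1) ≤ 2 * SG := by
  have key : ∀ U : ℕ, ∑ u ∈ Finset.range U, γ (2 ^ (u + 1) + 1) ≤
      2 * ∑ n ∈ Finset.Ico 1 (2 ^ U), γ (n + 1) / ((n : ℝ) + 1) := by
    intro U
    induction U with
    | zero => simp
    | succ U ih =>
      rw [Finset.sum_range_succ]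
      have hstep := cond1 hγ (2 ^ U) (Nat.one_le_two_pow)
      have hconsec : ∑ n ∈ Finset.Ico 1 (2 ^ U), γ (n + 1) / ((n : ℝ) + 1)
          + ∑ n ∈ Finset.Ico (2 ^ U) (2 ^ (U + 1)), γ (n + 1) / ((n : ℝ) + 1)
          = ∑ n ∈ Finset.Ico 1 (2 ^ (U + 1)), γ (n + 1) / ((n : ℝ) + 1) := by
        apply Finset.sum_Ico_consecutive
        · exact Nat.one_le_two_pow
        · exact Nat.pow_le_pow_right (by norm_num) (by omega)
      have h2 : (2 : ℕ) * 2 ^ U = 2 ^ (U + 1) := by rw [pow_succ]; ring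
      rw [h2] at hstep
      have : γ (2 ^ (U + 1) + 1) ≤ 2 * ∑ n ∈ Finset.Ico (2 ^ U) (2 ^ (U + 1)), γ (n + 1) / ((n : ℝ) + 1) := hstep
      linarith
  intro U
  exact le_trans (key U) (by linarith [hSG (2 ^ U)])

lemma gG_step (k : ℕ) (hk : 1 ≤ k) :
    gG γ k + 1 / (2 * γ (k + 1)) ≤ gG γ (2 * k) := by
  have hsplit : gG γ (2 * k) = gG γ k + ∑ t ∈ Finset.Ico k (2 * k), 1 / (((t : ℝ) + 1) * γ (t + 1)) := by
    unfold gG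
    rw [Finset.range_eq_Ico, ← Finset.sum_Ico_consecutive _ (Nat.zero_le k) (by omega : k ≤ 2 * k),
      ← Finset.range_eq_Ico]
  rw [hsplit]
  have hterm : ∀ t ∈ Finset.Ico k (2 * k),
      1 / (2 * (k : ℝ) * γ (k + 1)) ≤ 1 / (((t : ℝ) + 1) * γ (t + 1)) := by
    intro t ht
    rw [Finset.mem_Ico] at ht
    have hg1 : 0 < γ (k + 1) := gamma_pos hγ _ (by omega)
    have hg2 : 0 < γ (t + 1) := gamma_pos hγ _ (by omega)
    have hmono : γ (t + 1) ≤ γ (k + 1) := gamma_anti hγ (k + 1) (t + 1) (by omega) (by omega)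
    have htR : ((t : ℝ) + 1) ≤ 2 * (k : ℝ) := by
      have : t + 1 ≤ 2 * k := by omega
      exact_mod_cast this
    apply one_div_le_one_div_of_le
    · positivity
    · have h0 : (0:ℝ) < (t:ℝ)+1 := by positivity
      calc ((t : ℝ) + 1) * γ (t + 1) ≤ ((t : ℝ) + 1) * γ (k + 1) := by
            exact mul_le_mul_of_nonneg_left hmono h0.le
        _ ≤ 2 * (k : ℝ) * γ (k + 1) := by
            exact mul_le_mul_of_nonneg_right htR hg1.le
  have hsum := Finset.sum_le_sum hterm
  rw [Finset.sum_const, Nat.card_Ico, nsmul_eq_mul, show 2 * k - k = k by omega] at hsum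
  have hkR : (0:ℝ) < (k:ℝ) := by exact_mod_cast hk
  have hg1 : 0 < γ (k + 1) := gamma_pos hγ _ (by omega)
  have heq : (k : ℝ) * (1 / (2 * (k : ℝ) * γ (k + 1))) = 1 / (2 * γ (k + 1)) := by
    field_simp
  rw [heq] at hsum
  linarith

lemma gG_dyadic (s : ℕ) :
    (1 / 2) * ∑ r ∈ Finset.range s, 1 / γ (2 ^ r + 1) ≤ gG γ (2 ^ s) := by
  induction s with
  | zero => simp [gG_pos hγ 1 le_rfl, le_of_lt (gG_pos hγ 1 le_rfl)]
  | succ s ih =>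
    rw [Finset.sum_range_succ, mul_add]
    have hstep := gG_step hγ (2 ^ s) Nat.one_le_two_pow
    rw [show 2 * 2 ^ s = 2 ^ (s + 1) by rw [pow_succ]; ring] at hstep
    have : (1:ℝ)/2 * (1 / γ (2 ^ s + 1)) = 1 / (2 * γ (2 ^ s + 1)) := by
      rw [div_mul_div_comm, one_mul]
    rw [this]
    linarith

lemma gG_lower (s : ℕ) :
    ((s : ℝ) / 4) * (1 / γ (2 ^ (s / 2) + 1)) ≤ gG γ (2 ^ s) := by
  have hgp : ∀ r : ℕ, 0 < γ (2 ^ r + 1) := fun r => gamma_pos hγ _ (Nat.le_add_left 1 _)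
  have h1 : ∑ r ∈ Finset.Ico (s / 2) s, 1 / γ (2 ^ r + 1) ≤ ∑ r ∈ Finset.range s, 1 / γ (2 ^ r + 1) := by
    apply Finset.sum_le_sum_of_subset_of_nonneg
    · rw [Finset.range_eq_Ico]
      exact Finset.Ico_subset_Ico (Nat.zero_le _) le_rfl
    · intro r _ _
      exact le_of_lt (one_div_pos.2 (hgp r))
  have h2 : ∀ r ∈ Finset.Ico (s / 2) s, 1 / γ (2 ^ (s / 2) + 1) ≤ 1 / γ (2 ^ r + 1) := by
    intro r hr
    rw [Finset.mem_Ico] at hr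
    apply one_div_le_one_div_of_le (hgp r)
    exact gamma_anti hγ _ _ (Nat.le_add_left 1 _)
      (by have := Nat.pow_le_pow_right (show 1 ≤ 2 by norm_num) hr.1; omega)
  have h3 := Finset.sum_le_sum h2
  rw [Finset.sum_const, Nat.card_Ico, nsmul_eq_mul] at h3
  have h4 : (s : ℝ) / 2 ≤ ((s - s / 2 : ℕ) : ℝ) := by
    have : s ≤ 2 * (s - s / 2) := by omega
    have h' : (s : ℝ) ≤ 2 * ((s - s / 2 : ℕ) : ℝ) := by exact_mod_cast this
    linarith
  have h5 : (0:ℝ) ≤ 1 / γ (2 ^ (s / 2) + 1) := le_of_lt (one_div_pos.2 (gamma_pos hγ _ (Nat.le_add_left 1 _)))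
  have h6 : (s : ℝ) / 2 * (1 / γ (2 ^ (s / 2) + 1)) ≤ ∑ r ∈ Finset.range s, 1 / γ (2 ^ r + 1) :=
    le_trans (mul_le_mul_of_nonneg_right h4 h5) (le_trans h3 h1)
  have := gG_dyadic hγ s
  calc ((s : ℝ) / 4) * (1 / γ (2 ^ (s / 2) + 1))
      = (1/2) * ((s : ℝ) / 2 * (1 / γ (2 ^ (s / 2) + 1))) := by ring
    _ ≤ (1/2) * ∑ r ∈ Finset.range s, 1 / γ (2 ^ r + 1) := by linarith
    _ ≤ gG γ (2 ^ s) := this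

lemma block_bound (s : ℕ) (hs : 1 ≤ s) :
    ∑ t ∈ Finset.Ico (2 ^ s) (2 ^ (s + 1)), Db t / gG γ (t + 1) ≤ 24 * γ (2 ^ (s / 2) + 1) := by
  have hgp : 0 < γ (2 ^ (s / 2) + 1) := gamma_pos hγ _ (Nat.le_add_left 1 _)
  have hsR : (1:ℝ) ≤ (s:ℝ) := by exact_mod_cast hs
  have hGpos : (0:ℝ) < gG γ (2 ^ s) := gG_pos hγ _ Nat.one_le_two_pow
  have hG := gG_lower hγ s
  have hinv : 1 / gG γ (2 ^ s) ≤ 4 * γ (2 ^ (s / 2) + 1) / (s : ℝ) := by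
    have heq : ((s : ℝ) / 4) * (1 / γ (2 ^ (s / 2) + 1)) = (s : ℝ) / (4 * γ (2 ^ (s / 2) + 1)) := by
      field_simp
    rw [heq] at hG
    have hp : (0:ℝ) < (s : ℝ) / (4 * γ (2 ^ (s / 2) + 1)) := div_pos (by linarith) (by linarith)
    have := one_div_le_one_div_of_le hp hG
    rwa [one_div_div] at this
  have hterm : ∀ t ∈ Finset.Ico (2 ^ s) (2 ^ (s + 1)), Db t / gG γ (t + 1) ≤
      (2 * ((s:ℝ) + 2) / (2 ^ s : ℝ)) * (4 * γ (2 ^ (s / 2) + 1) / (s : ℝ)) := by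
    intro t ht
    rw [Finset.mem_Ico] at ht
    have h2s : ((2:ℝ) ^ s) ≤ (t : ℝ) + 1 := by
      have : (2 ^ s : ℕ) ≤ t + 1 := by omega
      exact_mod_cast this
    have hlog : Real.log ((t:ℝ) + 1) ≤ (s:ℝ) + 1 := by
      have h1 : ((t:ℝ) + 1) ≤ (2:ℝ) ^ (s+1) := by
        have : t + 1 ≤ 2 ^ (s + 1) := by omega
        exact_mod_cast this
      have h2 : Real.log ((t:ℝ)+1) ≤ Real.log ((2:ℝ) ^ (s+1)) :=
        Real.log_le_log (by positivity) h1
      have h3 : Real.log ((2:ℝ) ^ (s+1)) = ((s:ℝ)+1) * Real.log 2 := by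
        rw [Real.log_pow]; push_cast; ring
      have h4 : Real.log 2 ≤ 1 := by
        have := Real.log_le_sub_one_of_pos (show (0:ℝ) < 2 by norm_num)
        linarith
      have h5 : ((s:ℝ)+1) * Real.log 2 ≤ ((s:ℝ)+1) * 1 :=
        mul_le_mul_of_nonneg_left h4 (by linarith)
      linarith
    have hDb : Db t ≤ 2 * ((s:ℝ) + 2) / (2 ^ s : ℝ) := by
      unfold Db
      apply div_le_div₀ (by linarith) (by linarith) (by positivity) h2s
    have hGt : gG γ (2 ^ s) ≤ gG γ (t + 1) := gG_mono hγ (by omega)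
    have hGtpos : (0:ℝ) < gG γ (t + 1) := lt_of_lt_of_le hGpos hGt
    calc Db t / gG γ (t + 1) ≤ Db t / gG γ (2 ^ s) := by
          apply div_le_div_of_nonneg_left (Db_pos t).le hGpos hGt
      _ = Db t * (1 / gG γ (2 ^ s)) := by rw [mul_one_div]
      _ ≤ (2 * ((s:ℝ) + 2) / (2 ^ s : ℝ)) * (4 * γ (2 ^ (s / 2) + 1) / (s : ℝ)) := by
          apply mul_le_mul hDb hinv (one_div_pos.2 hGpos).le (by positivity)
  have hsum := Finset.sum_le_sum hterm
  rw [Finset.sum_const, Nat.card_Ico, nsmul_eq_mul] at hsum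
  have hcard : ((2 ^ (s+1) - 2 ^ s : ℕ) : ℝ) = (2 ^ s : ℝ) := by
    have h2 : (2:ℕ) ^ (s+1) = 2 ^ s + 2 ^ s := by rw [pow_succ]; ring
    rw [h2, Nat.add_sub_cancel]; push_cast; ring
  rw [hcard] at hsum
  have hfin : ((2:ℝ) ^ s) * ((2 * ((s:ℝ) + 2) / (2 ^ s : ℝ)) * (4 * γ (2 ^ (s / 2) + 1) / (s : ℝ)))
      ≤ 24 * γ (2 ^ (s / 2) + 1) := by
    have h2p : (0:ℝ) < (2:ℝ)^s := by positivity
    have heq : ((2:ℝ) ^ s) * ((2 * ((s:ℝ) + 2) / (2 ^ s : ℝ)) * (4 * γ (2 ^ (s / 2) + 1) / (s : ℝ)))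
        = 8 * (((s:ℝ) + 2) / (s:ℝ)) * γ (2 ^ (s / 2) + 1) := by
      field_simp
      ring
    rw [heq]
    have h32 : ((s:ℝ) + 2) / (s:ℝ) ≤ 3 := by
      rw [div_le_iff₀ (by linarith)]
      linarith
    nlinarith [hgp]
  linarith

lemma sumD_bounded (SG : ℝ)
    (hSG : ∀ U : ℕ, ∑ n ∈ Finset.Ico 1 U, γ (n + 1) / ((n : ℝ) + 1) ≤ SG) (M : ℕ) :
    ∑ t ∈ Finset.range M, Db t / gG γ (t + 1) ≤ 52 * γ 1 + 96 * SG := by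
  set a : ℕ → ℝ := fun t => Db t / gG γ (t + 1) with ha
  have haN : ∀ t, 0 ≤ a t := fun t =>
    div_nonneg (Db_pos t).le (gG_pos hγ (t + 1) (by omega)).le
  have hγ1 : 0 < γ 1 := gamma_pos hγ 1 le_rfl
  -- decomposition
  have hdec : ∀ U : ℕ, ∑ t ∈ Finset.range (2 ^ (U + 1)), a t =
      ∑ t ∈ Finset.range 2, a t + ∑ s ∈ Finset.range U, ∑ t ∈ Finset.Ico (2 ^ (s + 1)) (2 ^ (s + 2)), a t := by
    intro U
    induction U with
    | zero => norm_num
    | succ U ih =>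
      have hc : ∑ t ∈ Finset.range (2 ^ (U + 1)), a t + ∑ t ∈ Finset.Ico (2 ^ (U + 1)) (2 ^ (U + 2)), a t
          = ∑ t ∈ Finset.range (2 ^ (U + 2)), a t := by
        rw [Finset.range_eq_Ico, Finset.range_eq_Ico]
        exact Finset.sum_Ico_consecutive _ (Nat.zero_le _)
          (Nat.pow_le_pow_right (n := 2) (i := U + 1) (j := U + 2) (by norm_num) (by omega))
      rw [Finset.sum_range_succ (fun s => ∑ t ∈ Finset.Ico (2 ^ (s + 1)) (2 ^ (s + 2)), a t) U,
        ← hc, ih]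
      ring
  -- Finset.range 2 part
  have hgG1 : gG γ 1 = 1 / γ 1 := by simp [gG]
  have hgG1pos : 0 < gG γ 1 := gG_pos hγ 1 le_rfl
  have ha0 : a 0 ≤ 2 * γ 1 := by
    have hDb0 : Db 0 = 2 := by simp [Db]
    have h0 : a 0 = Db 0 / gG γ 1 := rfl
    have h1 : (2:ℝ) / (1 / γ 1) = 2 * γ 1 := by field_simp
    rw [h0, hDb0, hgG1, h1]
  have ha1 : a 1 ≤ 2 * γ 1 := by
    have hDb1 : Db 1 ≤ 2 := by
      have h4 : Real.log 2 ≤ 1 := by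
        have := Real.log_le_sub_one_of_pos (show (0:ℝ) < 2 by norm_num)
        linarith
      unfold Db
      have he : ((1:ℕ):ℝ) + 1 = 2 := by norm_num
      rw [he, div_le_iff₀ (by norm_num : (0:ℝ) < 2)]
      linarith
    have hmono : gG γ 1 ≤ gG γ 2 := gG_mono hγ (by omega)
    calc a 1 = Db 1 / gG γ 2 := rfl
      _ ≤ Db 1 / gG γ 1 := div_le_div_of_nonneg_left (Db_pos 1).le hgG1pos hmono
      _ ≤ 2 / gG γ 1 := by gcongr
      _ = 2 * γ 1 := by rw [hgG1]; field_simp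
  -- block part
  have hblocks : ∀ U : ℕ, ∑ s ∈ Finset.range U, ∑ t ∈ Finset.Ico (2 ^ (s + 1)) (2 ^ (s + 2)), a t
      ≤ 24 * (2 * γ 1 + 4 * SG) := by
    intro U
    set g : ℕ → ℝ := fun u => γ (2 ^ u + 1) with hgdef
    have hgnn : ∀ u, 0 ≤ g u := fun u => (gamma_pos hγ _ (Nat.le_add_left 1 _)).le
    have h1 : ∑ s ∈ Finset.range U, ∑ t ∈ Finset.Ico (2 ^ (s + 1)) (2 ^ (s + 2)), a t
        ≤ ∑ s ∈ Finset.range U, 24 * g ((s + 1) / 2) := by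
      apply Finset.sum_le_sum
      intro s _
      exact block_bound hγ (s + 1) (by omega)
    have h2 : ∑ s ∈ Finset.range U, g ((s + 1) / 2) ≤ ∑ s ∈ Finset.range (U + 1), g (s / 2) := by
      rw [Finset.sum_range_succ' (fun s => g (s / 2)) U]
      have : (0:ℕ) / 2 = 0 := rfl
      simp only [this]
      have := hgnn 0
      linarith
    have h3 := double_count g hgnn (U + 1)
    have h4 : ∑ u ∈ Finset.range (U + 1), g u ≤ 2 * SG + γ 1 := by
      rw [Finset.sum_range_succ' g U]
      have h5 : ∑ u ∈ Finset.range U, g (u + 1) ≤ 2 * SG := by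
        have := cond_chain hγ SG hSG U
        simpa [hgdef] using this
      have h6 : g 0 ≤ γ 1 := by
        have : g 0 = γ 2 := by norm_num [hgdef]
        rw [this]
        exact (hγ 1 le_rfl).2
      linarith
    calc ∑ s ∈ Finset.range U, ∑ t ∈ Finset.Ico (2 ^ (s + 1)) (2 ^ (s + 2)), a t
        ≤ ∑ s ∈ Finset.range U, 24 * g ((s + 1) / 2) := h1
      _ = 24 * ∑ s ∈ Finset.range U, g ((s + 1) / 2) := by rw [Finset.mul_sum]
      _ ≤ 24 * (2 * (2 * SG + γ 1)) := by
          have : ∑ s ∈ Finset.range U, g ((s + 1) / 2) ≤ 2 * (2 * SG + γ 1) :=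
            le_trans h2 (le_trans h3 (by linarith))
          linarith
      _ ≤ 24 * (2 * γ 1 + 4 * SG) := by linarith
  -- final
  have hM : M ≤ 2 ^ (M + 1) := le_trans (Nat.lt_two_pow_self (n := M)).le
    (Nat.pow_le_pow_right (n := 2) (by norm_num) (by omega))
  calc ∑ t ∈ Finset.range M, a t ≤ ∑ t ∈ Finset.range (2 ^ (M + 1)), a t :=
        Finset.sum_le_sum_of_subset_of_nonneg (Finset.range_subset_range.2 hM) (fun t _ _ => haN t)
    _ = ∑ t ∈ Finset.range 2, a t + ∑ s ∈ Finset.range M, ∑ t ∈ Finset.Ico (2 ^ (s + 1)) (2 ^ (s + 2)), a t := hdec M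
    _ ≤ (2 * γ 1 + 2 * γ 1) + 24 * (2 * γ 1 + 4 * SG) := by
        have hr2 : ∑ t ∈ Finset.range 2, a t = a 0 + a 1 := by
          rw [Finset.sum_range_succ, Finset.sum_range_one]
        rw [hr2]
        have := hblocks M
        linarith
    _ ≤ 52 * γ 1 + 96 * SG := by linarith

lemma half (n m : ℕ) (c : ℕ → ℕ → ℝ) (hc : ∀ i j, 0 ≤ c i j) (W CB : ℝ) (hW : 0 ≤ W)
    (hCB : ∀ M : ℕ, ∑ t ∈ Finset.range M, Db t / gG γ (t + 1) ≤ CB)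
    (row : ∀ i, i < n → ∀ S : Finset ℕ, (∀ j ∈ S, j < m) → ∀ v : ℝ, 0 ≤ v →
      (∀ j ∈ S, v ≤ c i j) → v * gG γ S.card ≤ W) :
    ∑ i ∈ Finset.range n, ∑ j ∈ Finset.Ico i m, c i j / (((i : ℝ) + 1) * ((j : ℝ) + 1)) ≤ W * CB := by
  classical
  have hGpos := gG_pos hγ
  have inner : ∀ i, i < n →
      ∑ j ∈ Finset.Ico i m, c i j / (((i : ℝ) + 1) * ((j : ℝ) + 1)) ≤
      ∑ t ∈ Finset.range m, (W / gG γ (t + 1)) * (1 / (((i : ℝ) + 1) * ((i : ℝ) + (t : ℝ) + 1))) := by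
    intro i hi
    set K := m - i with hK
    set d : Fin K → ℝ := fun t => c i (i + (t : ℕ)) with hd
    set w : Fin K → ℝ := fun t => 1 / (((i : ℝ) + 1) * ((i : ℝ) + ((t : ℕ) : ℝ) + 1)) with hwdef
    have hrw : ∑ j ∈ Finset.Ico i m, c i j / (((i : ℝ) + 1) * ((j : ℝ) + 1)) = ∑ t, d t * w t := by
      rw [Finset.sum_Ico_eq_sum_range, ← Fin.sum_univ_eq_sum_range]
      apply Finset.sum_congr rfl
      intro t _
      rw [hd, hwdef]
      push_cast
      rw [div_eq_mul_one_div]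
    rw [hrw]
    have hsb := sort_bound K d w (fun t => hc _ _)
      (fun t => by positivity)
      (fun s t hst => by
        apply one_div_le_one_div_of_le
        · positivity
        · have : ((s : ℕ) : ℝ) ≤ ((t : ℕ) : ℝ) := by exact_mod_cast hst
          nlinarith [this, Nat.cast_nonneg (α := ℝ) i, Nat.cast_nonneg (α := ℝ) (s : ℕ)])
      (gG γ) hGpos W
      (by
        intro S v hv hvle
        have hcard : (S.image (fun t : Fin K => i + (t : ℕ))).card = S.card := by
          apply Finset.card_image_of_injective
          intro a b hab
          have hab' : i + (a : ℕ) = i + (b : ℕ) := hab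
          exact Fin.ext (by omega)
        have := row i hi (S.image (fun t : Fin K => i + (t : ℕ)))
          (by
            intro j hj
            rcases Finset.mem_image.1 hj with ⟨t, _, rfl⟩
            have h1 := t.isLt
            show i + (t : ℕ) < m
            omega)
          v hv
          (by
            intro j hj
            rcases Finset.mem_image.1 hj with ⟨t, ht, rfl⟩
            exact hvle t ht)
        rwa [hcard] at this)
    apply le_trans hsb
    have : ∑ t : Fin K, (W / gG γ ((t : ℕ) + 1)) * w t
        = ∑ t ∈ Finset.range K, (W / gG γ (t + 1)) * (1 / (((i : ℝ) + 1) * ((i : ℝ) + (t : ℝ) + 1))) := by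
      rw [← Fin.sum_univ_eq_sum_range]
    rw [this]
    apply Finset.sum_le_sum_of_subset_of_nonneg (Finset.range_subset_range.2 (by omega))
    intro t _ _
    have := hGpos (t + 1) (by omega)
    positivity
  calc ∑ i ∈ Finset.range n, ∑ j ∈ Finset.Ico i m, c i j / (((i : ℝ) + 1) * ((j : ℝ) + 1))
      ≤ ∑ i ∈ Finset.range n, ∑ t ∈ Finset.range m,
          (W / gG γ (t + 1)) * (1 / (((i : ℝ) + 1) * ((i : ℝ) + (t : ℝ) + 1))) := by
        apply Finset.sum_le_sum
        intro i hi
        exact inner i (Finset.mem_range.1 hi)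
    _ = ∑ t ∈ Finset.range m, (W / gG γ (t + 1)) *
          ∑ i ∈ Finset.range n, 1 / (((i : ℝ) + 1) * ((i : ℝ) + (t : ℝ) + 1)) := by
        rw [Finset.sum_comm]
        exact Finset.sum_congr rfl fun t _ => by rw [Finset.mul_sum]
    _ ≤ ∑ t ∈ Finset.range m, (W / gG γ (t + 1)) * Db t := by
        apply Finset.sum_le_sum
        intro t _
        apply mul_le_mul_of_nonneg_left (Dbound t n)
        exact div_nonneg hW (hGpos (t + 1) (by omega)).le
    _ = W * ∑ t ∈ Finset.range m, Db t / gG γ (t + 1) := by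
        rw [Finset.mul_sum]
        exact Finset.sum_congr rfl fun t _ => by ring
    _ ≤ W * CB := mul_le_mul_of_nonneg_left (hCB m) hW


end
end GS

end GSaux

/-- Goginava–Sahakian, Theorem 1, part 1:
if `λ_n = n·γ_n` with `γ_n ≥ γ_{n+1} > 0` and `Σ γ_n/n < ∞`, then `PΛBV ⊆ HBV`. -/
theorem stmt0 (γ : ℕ → ℝ)
    (hγ : ∀ n, 1 ≤ n → 0 < γ (n + 1) ∧ γ (n + 1) ≤ γ n)
    (hsum : Summable fun n : ℕ => γ (n + 1) / ((n : ℝ) + 1))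
    (f : ℝ → ℝ → ℝ) (hper : Periodic2 f)
    (hPBV : LamV1 (fun n => (n : ℝ) * γ n) f + LamV2 (fun n => (n : ℝ) * γ n) f ≠ ⊤) :
    HarmonicV f ≠ ⊤ := by
  classical
  set Λ : ℕ → ℝ := fun k => (k : ℝ) * γ k with hΛdef
  obtain ⟨hL1top, hL2top⟩ := ENNReal.add_ne_top.1 hPBV
  set A := (LamV1 Λ f).toReal with hAdef
  set B := (LamV2 Λ f).toReal with hBdef
  have hA0 : 0 ≤ A := ENNReal.toReal_nonneg
  have hB0 : 0 ≤ B := ENNReal.toReal_nonneg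
  have hγ1 : 0 < γ 1 := GS.gamma_pos hγ 1 le_rfl
  have hΛpos : ∀ k : ℕ, 1 ≤ k → 0 < Λ k := by
    intro k hk
    have h1 := GS.gamma_pos hγ k hk
    have hkR : (0:ℝ) < (k:ℝ) := by exact_mod_cast hk
    exact mul_pos hkR h1
  -- extraction of the PΛBV bounds
  have hA : ∀ y ∈ Icc (0:ℝ) (2*Real.pi), ∀ (k : ℕ) (I : Fin k → ℝ × ℝ), NonoverlapIcc k I →
      ∑ i, |f (I i).2 y - f (I i).1 y| / Λ ((i : ℕ) + 1) ≤ A := by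
    intro y hy k I hno
    refine (ENNReal.ofReal_le_iff_le_toReal hL1top).1 ?_
    rw [LamV1]
    exact le_iSup_of_le y (le_iSup_of_le hy (le_iSup_of_le k (le_iSup_of_le I
      (le_iSup_of_le hno le_rfl))))
  have hB : ∀ x ∈ Icc (0:ℝ) (2*Real.pi), ∀ (k : ℕ) (J : Fin k → ℝ × ℝ), NonoverlapIcc k J →
      ∑ j, |f x (J j).2 - f x (J j).1| / Λ ((j : ℕ) + 1) ≤ B := by
    intro x hx k J hno
    refine (ENNReal.ofReal_le_iff_le_toReal hL2top).1 ?_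
    rw [LamV2]
    exact le_iSup_of_le x (le_iSup_of_le hx (le_iSup_of_le k (le_iSup_of_le J
      (le_iSup_of_le hno le_rfl))))
  -- constants
  set SG := ∑' n : ℕ, γ (n+1) / ((n:ℝ)+1) with hSGdef
  have htermnn : ∀ n : ℕ, 0 ≤ γ (n+1) / ((n:ℝ)+1) := fun n =>
    div_nonneg (GS.gamma_pos hγ (n+1) (by omega)).le (by positivity)
  have hSG : ∀ U : ℕ, ∑ n ∈ Finset.Ico 1 U, γ (n + 1) / ((n : ℝ) + 1) ≤ SG := fun U =>
    hsum.sum_le_tsum _ (fun i _ => htermnn i)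
  set CB := 52 * γ 1 + 96 * SG with hCBdef
  have hCB : ∀ M : ℕ, ∑ t ∈ Finset.range M, GS.Db t / GS.gG γ (t + 1) ≤ CB :=
    GS.sumD_bounded hγ SG hSG
  have hCB0 : 0 ≤ CB := le_trans (by simp) (hCB 0)
  -- weight comparison
  have hweight : ∀ (a : ℝ) (i : ℕ), 0 ≤ a →
      a / (((i+1 : ℕ)) : ℝ) ≤ γ 1 * (a / Λ (i+1)) := by
    intro a i ha
    have hg : 0 < γ (i+1) := GS.gamma_pos hγ (i+1) (by omega)
    have hgle : γ (i+1) ≤ γ 1 := GS.gamma_anti hγ 1 (i+1) le_rfl (by omega)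
    have hk : (0:ℝ) < (((i+1 : ℕ)) : ℝ) := by positivity
    have hΛ : Λ (i+1) = (((i+1 : ℕ)) : ℝ) * γ (i+1) := rfl
    rw [hΛ]
    have h1 : a / (((i+1 : ℕ)) : ℝ) = (a * γ (i+1)) / ((((i+1 : ℕ)) : ℝ) * γ (i+1)) :=
      (mul_div_mul_right _ _ (ne_of_gt hg)).symm
    have h2 : γ 1 * (a / ((((i+1 : ℕ)) : ℝ) * γ (i+1)))
        = (a * γ 1) / ((((i+1 : ℕ)) : ℝ) * γ (i+1)) := by ring
    rw [h1, h2]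
    apply div_le_div_of_nonneg_right ?_ (by positivity)
    exact mul_le_mul_of_nonneg_left hgle ha
  -- harmonic LamV1 bound
  have hHL1 : LamV1 (fun k : ℕ => (k : ℝ)) f ≤ ENNReal.ofReal (γ 1 * A) := by
    rw [LamV1]
    refine iSup_le fun y => iSup_le fun hy => iSup_le fun k => iSup_le fun I =>
      iSup_le fun hno => ?_
    apply ENNReal.ofReal_le_ofReal
    calc ∑ i : Fin k, |f (I i).2 y - f (I i).1 y| / (((i : ℕ) + 1 : ℕ) : ℝ)
        ≤ ∑ i : Fin k, γ 1 * (|f (I i).2 y - f (I i).1 y| / Λ ((i : ℕ)+1)) :=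
          Finset.sum_le_sum fun i _ => hweight _ _ (abs_nonneg _)
      _ = γ 1 * ∑ i : Fin k, |f (I i).2 y - f (I i).1 y| / Λ ((i : ℕ)+1) := by
          rw [Finset.mul_sum]
      _ ≤ γ 1 * A := mul_le_mul_of_nonneg_left (hA y hy k I hno) hγ1.le
  have hHL2 : LamV2 (fun k : ℕ => (k : ℝ)) f ≤ ENNReal.ofReal (γ 1 * B) := by
    rw [LamV2]
    refine iSup_le fun x => iSup_le fun hx => iSup_le fun k => iSup_le fun J =>
      iSup_le fun hno => ?_
    apply ENNReal.ofReal_le_ofReal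
    calc ∑ j : Fin k, |f x (J j).2 - f x (J j).1| / (((j : ℕ) + 1 : ℕ) : ℝ)
        ≤ ∑ j : Fin k, γ 1 * (|f x (J j).2 - f x (J j).1| / Λ ((j : ℕ)+1)) :=
          Finset.sum_le_sum fun j _ => hweight _ _ (abs_nonneg _)
      _ = γ 1 * ∑ j : Fin k, |f x (J j).2 - f x (J j).1| / Λ ((j : ℕ)+1) := by
          rw [Finset.mul_sum]
      _ ≤ γ 1 * B := mul_le_mul_of_nonneg_left (hB x hx k J hno) hγ1.le
  -- mixed harmonic bound
  have hHL12 : LamV12 (fun k : ℕ => (k : ℝ)) f ≤ ENNReal.ofReal (2*B*CB + 2*A*CB) := by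
    rw [LamV12]
    refine iSup_le fun n => iSup_le fun m => iSup_le fun I => iSup_le fun J =>
      iSup_le fun hno1 => iSup_le fun hno2 => ?_
    apply ENNReal.ofReal_le_ofReal
    set c : ℕ → ℕ → ℝ := fun i j =>
      if h : i < n ∧ j < m then
        |f (I ⟨i, h.1⟩).1 (J ⟨j, h.2⟩).1 - f (I ⟨i, h.1⟩).1 (J ⟨j, h.2⟩).2 -
          f (I ⟨i, h.1⟩).2 (J ⟨j, h.2⟩).1 + f (I ⟨i, h.1⟩).2 (J ⟨j, h.2⟩).2|
      else 0 with hcdef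
    have hcnn : ∀ i j, 0 ≤ c i j := by
      intro i j
      rw [hcdef]
      dsimp only
      split
      · exact abs_nonneg _
      · exact le_rfl
    -- row constraints
    have rowB : ∀ i, i < n → ∀ S : Finset ℕ, (∀ j ∈ S, j < m) → ∀ v : ℝ, 0 ≤ v →
        (∀ j ∈ S, v ≤ c i j) → v * GS.gG γ S.card ≤ 2 * B := by
      intro i hi S hSm v hv hvle
      set k := S.card with hk
      set e := S.orderIsoOfFin hk.symm with he
      have hmem : ∀ t : Fin k, ((e t : ℕ)) < m := fun t => hSm _ (e t).2
      set J' : Fin k → ℝ × ℝ := fun t => J ⟨(e t : ℕ), hmem t⟩ with hJ'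
      have hno' : NonoverlapIcc k J' := by
        constructor
        · intro t
          exact hno2.1 _
        · intro t t' htt'
          refine hno2.2 _ _ (fun hEq => htt' ?_)
          have h1 : ((e t : ℕ)) = ((e t' : ℕ)) := congrArg Fin.val hEq
          exact e.injective (Subtype.coe_injective h1)
      obtain ⟨ha0, hab, hb2π⟩ := hno1.1 ⟨i, hi⟩
      have hamem : (I ⟨i,hi⟩).1 ∈ Icc (0:ℝ) (2*Real.pi) := ⟨ha0, le_trans hab.le hb2π⟩
      have hbmem : (I ⟨i,hi⟩).2 ∈ Icc (0:ℝ) (2*Real.pi) := ⟨le_trans ha0 hab.le, hb2π⟩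
      have hBa := hB _ hamem k J' hno'
      have hBb := hB _ hbmem k J' hno'
      have hgg : v * GS.gG γ k = ∑ t : Fin k, v / Λ ((t : ℕ)+1) := by
        rw [GS.gG, Finset.mul_sum,
          ← Fin.sum_univ_eq_sum_range (fun t => v * (1 / (((t:ℝ)+1) * γ (t+1))))]
        apply Finset.sum_congr rfl
        intro t _
        have hΛ : Λ ((t : ℕ)+1) = ((((t : ℕ)+1 : ℕ)) : ℝ) * γ ((t : ℕ)+1) := rfl
        rw [hΛ, mul_one_div]
        push_cast
        ring
      rw [hgg]
      have hterm : ∀ t : Fin k, v / Λ ((t : ℕ)+1) ≤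
          (|f (I ⟨i,hi⟩).1 (J' t).2 - f (I ⟨i,hi⟩).1 (J' t).1| +
           |f (I ⟨i,hi⟩).2 (J' t).2 - f (I ⟨i,hi⟩).2 (J' t).1|) / Λ ((t : ℕ)+1) := by
        intro t
        have hΛp := hΛpos ((t : ℕ)+1) (by omega)
        apply div_le_div_of_nonneg_right ?_ hΛp.le
        have h1 := hvle _ (e t).2
        have hcv : c i ((e t : ℕ)) =
            |f (I ⟨i,hi⟩).1 (J' t).1 - f (I ⟨i,hi⟩).1 (J' t).2 -
              f (I ⟨i,hi⟩).2 (J' t).1 + f (I ⟨i,hi⟩).2 (J' t).2| := by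
          rw [hcdef]
          dsimp only
          rw [dif_pos ⟨hi, hmem t⟩]
        rw [hcv] at h1
        refine le_trans h1 ?_
        have hre : f (I ⟨i,hi⟩).1 (J' t).1 - f (I ⟨i,hi⟩).1 (J' t).2 -
            f (I ⟨i,hi⟩).2 (J' t).1 + f (I ⟨i,hi⟩).2 (J' t).2
            = (f (I ⟨i,hi⟩).1 (J' t).1 - f (I ⟨i,hi⟩).1 (J' t).2)
              - (f (I ⟨i,hi⟩).2 (J' t).1 - f (I ⟨i,hi⟩).2 (J' t).2) := by ring
        rw [hre]
        refine le_trans (abs_sub _ _) ?_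
        rw [abs_sub_comm (f (I ⟨i,hi⟩).1 (J' t).1) (f (I ⟨i,hi⟩).1 (J' t).2),
          abs_sub_comm (f (I ⟨i,hi⟩).2 (J' t).1) (f (I ⟨i,hi⟩).2 (J' t).2)]
      calc ∑ t : Fin k, v / Λ ((t : ℕ)+1)
          ≤ ∑ t : Fin k, (|f (I ⟨i,hi⟩).1 (J' t).2 - f (I ⟨i,hi⟩).1 (J' t).1| +
              |f (I ⟨i,hi⟩).2 (J' t).2 - f (I ⟨i,hi⟩).2 (J' t).1|) / Λ ((t : ℕ)+1) :=
            Finset.sum_le_sum fun t _ => hterm t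
        _ = ∑ t : Fin k, |f (I ⟨i,hi⟩).1 (J' t).2 - f (I ⟨i,hi⟩).1 (J' t).1| / Λ ((t : ℕ)+1)
            + ∑ t : Fin k, |f (I ⟨i,hi⟩).2 (J' t).2 - f (I ⟨i,hi⟩).2 (J' t).1| / Λ ((t : ℕ)+1) := by
            rw [← Finset.sum_add_distrib]
            exact Finset.sum_congr rfl fun t _ => add_div _ _ _
        _ ≤ B + B := add_le_add hBa hBb
        _ = 2 * B := by ring
    have rowA : ∀ j, j < m → ∀ S : Finset ℕ, (∀ i ∈ S, i < n) → ∀ v : ℝ, 0 ≤ v →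
        (∀ i ∈ S, v ≤ c i j) → v * GS.gG γ S.card ≤ 2 * A := by
      intro j hj S hSn v hv hvle
      set k := S.card with hk
      set e := S.orderIsoOfFin hk.symm with he
      have hmem : ∀ t : Fin k, ((e t : ℕ)) < n := fun t => hSn _ (e t).2
      set I' : Fin k → ℝ × ℝ := fun t => I ⟨(e t : ℕ), hmem t⟩ with hI'
      have hno' : NonoverlapIcc k I' := by
        constructor
        · intro t
          exact hno1.1 _
        · intro t t' htt'
          refine hno1.2 _ _ (fun hEq => htt' ?_)
          have h1 : ((e t : ℕ)) = ((e t' : ℕ)) := congrArg Fin.val hEq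
          exact e.injective (Subtype.coe_injective h1)
      obtain ⟨hc0, hcd, hd2π⟩ := hno2.1 ⟨j, hj⟩
      have hcmem : (J ⟨j,hj⟩).1 ∈ Icc (0:ℝ) (2*Real.pi) := ⟨hc0, le_trans hcd.le hd2π⟩
      have hdmem : (J ⟨j,hj⟩).2 ∈ Icc (0:ℝ) (2*Real.pi) := ⟨le_trans hc0 hcd.le, hd2π⟩
      have hAc := hA _ hcmem k I' hno'
      have hAd := hA _ hdmem k I' hno'
      have hgg : v * GS.gG γ k = ∑ t : Fin k, v / Λ ((t : ℕ)+1) := by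
        rw [GS.gG, Finset.mul_sum,
          ← Fin.sum_univ_eq_sum_range (fun t => v * (1 / (((t:ℝ)+1) * γ (t+1))))]
        apply Finset.sum_congr rfl
        intro t _
        have hΛ : Λ ((t : ℕ)+1) = ((((t : ℕ)+1 : ℕ)) : ℝ) * γ ((t : ℕ)+1) := rfl
        rw [hΛ, mul_one_div]
        push_cast
        ring
      rw [hgg]
      have hterm : ∀ t : Fin k, v / Λ ((t : ℕ)+1) ≤
          (|f (I' t).2 (J ⟨j,hj⟩).1 - f (I' t).1 (J ⟨j,hj⟩).1| +
           |f (I' t).2 (J ⟨j,hj⟩).2 - f (I' t).1 (J ⟨j,hj⟩).2|) / Λ ((t : ℕ)+1) := by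
        intro t
        have hΛp := hΛpos ((t : ℕ)+1) (by omega)
        apply div_le_div_of_nonneg_right ?_ hΛp.le
        have h1 := hvle _ (e t).2
        have hcv : c ((e t : ℕ)) j =
            |f (I' t).1 (J ⟨j,hj⟩).1 - f (I' t).1 (J ⟨j,hj⟩).2 -
              f (I' t).2 (J ⟨j,hj⟩).1 + f (I' t).2 (J ⟨j,hj⟩).2| := by
          rw [hcdef]
          dsimp only
          rw [dif_pos ⟨hmem t, hj⟩]
        rw [hcv] at h1
        refine le_trans h1 ?_
        have hre : f (I' t).1 (J ⟨j,hj⟩).1 - f (I' t).1 (J ⟨j,hj⟩).2 -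
            f (I' t).2 (J ⟨j,hj⟩).1 + f (I' t).2 (J ⟨j,hj⟩).2
            = (f (I' t).2 (J ⟨j,hj⟩).2 - f (I' t).1 (J ⟨j,hj⟩).2)
              - (f (I' t).2 (J ⟨j,hj⟩).1 - f (I' t).1 (J ⟨j,hj⟩).1) := by ring
        rw [hre]
        refine le_trans (abs_sub _ _) ?_
        rw [add_comm]
      calc ∑ t : Fin k, v / Λ ((t : ℕ)+1)
          ≤ ∑ t : Fin k, (|f (I' t).2 (J ⟨j,hj⟩).1 - f (I' t).1 (J ⟨j,hj⟩).1| +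
              |f (I' t).2 (J ⟨j,hj⟩).2 - f (I' t).1 (J ⟨j,hj⟩).2|) / Λ ((t : ℕ)+1) :=
            Finset.sum_le_sum fun t _ => hterm t
        _ = ∑ t : Fin k, |f (I' t).2 (J ⟨j,hj⟩).1 - f (I' t).1 (J ⟨j,hj⟩).1| / Λ ((t : ℕ)+1)
            + ∑ t : Fin k, |f (I' t).2 (J ⟨j,hj⟩).2 - f (I' t).1 (J ⟨j,hj⟩).2| / Λ ((t : ℕ)+1) := by
            rw [← Finset.sum_add_distrib]
            exact Finset.sum_congr rfl fun t _ => add_div _ _ _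
        _ ≤ A + A := add_le_add hAc hAd
        _ = 2 * A := by ring
    -- convert the Fin-indexed double sum to range-indexed over c
    have hconv : ∑ i : Fin n, ∑ j : Fin m,
        |f (I i).1 (J j).1 - f (I i).1 (J j).2 - f (I i).2 (J j).1 + f (I i).2 (J j).2| /
          ((((i : ℕ) + 1 : ℕ) : ℝ) * (((j : ℕ) + 1 : ℕ) : ℝ))
        = ∑ i ∈ Finset.range n, ∑ j ∈ Finset.range m,
            c i j / (((i : ℝ) + 1) * ((j : ℝ) + 1)) := by
      rw [← Fin.sum_univ_eq_sum_range
        (fun i => ∑ j ∈ Finset.range m, c i j / (((i : ℝ) + 1) * ((j : ℝ) + 1))) n]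
      apply Finset.sum_congr rfl
      intro i _
      rw [← Fin.sum_univ_eq_sum_range
        (fun j => c (i : ℕ) j / ((((i : ℕ) : ℝ) + 1) * ((j : ℝ) + 1))) m]
      apply Finset.sum_congr rfl
      intro j _
      have hcv : c (i : ℕ) (j : ℕ) =
          |f (I i).1 (J j).1 - f (I i).1 (J j).2 - f (I i).2 (J j).1 + f (I i).2 (J j).2| := by
        rw [hcdef]
        dsimp only
        rw [dif_pos ⟨i.isLt, j.isLt⟩]
      rw [hcv]
      push_cast
      ring
    rw [hconv]
    -- split the double sum into the two triangular parts
    have hsplit : ∑ i ∈ Finset.range n, ∑ j ∈ Finset.range m,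
          c i j / (((i : ℝ) + 1) * ((j : ℝ) + 1))
        ≤ (∑ i ∈ Finset.range n, ∑ j ∈ Finset.Ico i m,
            c i j / (((i : ℝ) + 1) * ((j : ℝ) + 1)))
          + ∑ j ∈ Finset.range m, ∑ i ∈ Finset.Ico j n,
              c i j / (((j : ℝ) + 1) * ((i : ℝ) + 1)) := by
      have hterm : ∀ i j : ℕ, c i j / (((i : ℝ) + 1) * ((j : ℝ) + 1))
          = (if i ≤ j then c i j / (((i : ℝ) + 1) * ((j : ℝ) + 1)) else 0)
            + (if i ≤ j then 0 else c i j / (((i : ℝ) + 1) * ((j : ℝ) + 1))) := by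
        intro i j
        split <;> simp
      have h1 : ∑ i ∈ Finset.range n, ∑ j ∈ Finset.range m,
            (if i ≤ j then c i j / (((i : ℝ) + 1) * ((j : ℝ) + 1)) else 0)
          = ∑ i ∈ Finset.range n, ∑ j ∈ Finset.Ico i m,
              c i j / (((i : ℝ) + 1) * ((j : ℝ) + 1)) := by
        apply Finset.sum_congr rfl
        intro i _
        rw [← Finset.sum_filter]
        congr 1
        ext j
        simp [Finset.mem_Ico, Finset.mem_filter, Finset.mem_range, and_comm]
      have h2 : ∑ i ∈ Finset.range n, ∑ j ∈ Finset.range m,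
            (if i ≤ j then 0 else c i j / (((i : ℝ) + 1) * ((j : ℝ) + 1)))
          ≤ ∑ j ∈ Finset.range m, ∑ i ∈ Finset.Ico j n,
              c i j / (((j : ℝ) + 1) * ((i : ℝ) + 1)) := by
        rw [Finset.sum_comm]
        apply Finset.sum_le_sum
        intro j _
        have he1 : ∑ i ∈ Finset.range n,
            (if i ≤ j then 0 else c i j / (((i : ℝ) + 1) * ((j : ℝ) + 1)))
            = ∑ i ∈ Finset.Ico (j+1) n, c i j / (((i : ℝ) + 1) * ((j : ℝ) + 1)) := by
          have he2 : ∀ i : ℕ, (if i ≤ j then 0 else c i j / (((i : ℝ) + 1) * ((j : ℝ) + 1)))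
              = (if ¬ (i ≤ j) then c i j / (((i : ℝ) + 1) * ((j : ℝ) + 1)) else 0) :=
            fun i => (ite_not _ _ _).symm
          rw [Finset.sum_congr rfl fun i _ => he2 i, ← Finset.sum_filter]
          congr 1
          ext i
          simp only [Finset.mem_filter, Finset.mem_range, Finset.mem_Ico, not_le]
          omega
        rw [he1]
        have he3 : ∑ i ∈ Finset.Ico (j+1) n, c i j / (((i : ℝ) + 1) * ((j : ℝ) + 1))
            ≤ ∑ i ∈ Finset.Ico j n, c i j / (((i : ℝ) + 1) * ((j : ℝ) + 1)) := by
          apply Finset.sum_le_sum_of_subset_of_nonneg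
            (Finset.Ico_subset_Ico (by omega) le_rfl)
          intro i _ _
          have := hcnn i j
          positivity
        refine le_trans he3 (le_of_eq ?_)
        exact Finset.sum_congr rfl fun i _ => by rw [mul_comm]
      calc ∑ i ∈ Finset.range n, ∑ j ∈ Finset.range m,
            c i j / (((i : ℝ) + 1) * ((j : ℝ) + 1))
          = (∑ i ∈ Finset.range n, ∑ j ∈ Finset.range m,
              (if i ≤ j then c i j / (((i : ℝ) + 1) * ((j : ℝ) + 1)) else 0))
            + ∑ i ∈ Finset.range n, ∑ j ∈ Finset.range m,
              (if i ≤ j then 0 else c i j / (((i : ℝ) + 1) * ((j : ℝ) + 1))) := by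
            rw [← Finset.sum_add_distrib]
            apply Finset.sum_congr rfl
            intro i _
            rw [← Finset.sum_add_distrib]
            exact Finset.sum_congr rfl fun j _ => hterm i j
        _ ≤ _ := by
            rw [h1]
            exact add_le_add le_rfl h2
    refine le_trans hsplit ?_
    have hfirst := GS.half hγ n m c hcnn (2*B) CB (by linarith) hCB rowB
    have hsecond := GS.half hγ m n (fun j i => c i j) (fun j i => hcnn i j) (2*A) CB
      (by linarith) hCB rowA
    exact add_le_add hfirst hsecond
  -- conclude
  rw [HarmonicV]
  refine ENNReal.add_ne_top.2 ⟨ENNReal.add_ne_top.2 ⟨?_, ?_⟩, ?_⟩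
  · exact ne_top_of_le_ne_top ENNReal.ofReal_ne_top hHL1
  · exact ne_top_of_le_ne_top ENNReal.ofReal_ne_top hHL2
  · exact ne_top_of_le_ne_top ENNReal.ofReal_ne_top hHL12
end

section
/- For every p > 1, every 2π-periodic (in each variable) function f : ℝ² → ℝ of bounded partial p-variation (f ∈ PBV_p) has bounded harmonic variation: PBV_p ⊆ HBV. -/
open scoped ENNReal BigOperators
open Filter Set

section Helpers
open Finset

/-- Key Bernoulli consequence: `(1+1/x)^r ≥ 1 + r/(x+1)` for `x ≥ 1`, `r > 0`. -/
lemma key_bern {x r : ℝ} (hx : 1 ≤ x) (hr : 0 < r) :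
    1 + r / (x + 1) ≤ (1 + 1/x) ^ r := by
  have hx0 : 0 < x := lt_of_lt_of_le one_pos hx
  have hx1 : 0 < x + 1 := by linarith
  have hix : (0:ℝ) < 1/x := by positivity
  rcases le_or_gt 1 r with h1 | h1
  · calc 1 + r / (x+1) ≤ 1 + r * (1/x) := by
          have : r / (x+1) ≤ r * (1/x) := by
            rw [div_le_iff₀ hx1, mul_one_div, div_mul_eq_mul_div, le_div_iff₀ hx0]
            nlinarith
          linarith
      _ ≤ (1 + 1/x) ^ r := one_add_mul_self_le_rpow_one_add (by linarith) h1
  · -- 0 < r < 1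
    have ht : r / (x+1) < 1 := by rw [div_lt_one hx1]; linarith
    have ht0 : 0 < r / (x+1) := by positivity
    have hB := rpow_one_add_le_one_add_mul_self (s := -(1/(x+1)))
      (by rw [neg_le_neg_iff]; rw [div_le_one hx1]; linarith) hr.le h1.le
    have hbase : 1 + -(1/(x+1)) = x / (x+1) := by field_simp; ring
    rw [hbase, mul_neg, ← sub_eq_add_neg, mul_one_div] at hB
    have hfrac : (1:ℝ) + 1/x = ((x/(x+1)))⁻¹ := by field_simp [ne_of_gt hx0]
    have hbpos : 0 < (x/(x+1)) ^ r := Real.rpow_pos_of_pos (by positivity) r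
    rw [hfrac, Real.inv_rpow (by positivity)]
    have hy : 1 ≤ ((x/(x+1)) ^ r)⁻¹ * (1 - r/(x+1)) := by
      calc (1:ℝ) = ((x/(x+1)) ^ r)⁻¹ * ((x/(x+1)) ^ r) := (inv_mul_cancel₀ (ne_of_gt hbpos)).symm
        _ ≤ _ := by
          apply mul_le_mul_of_nonneg_left hB (le_of_lt (inv_pos.mpr hbpos))
    nlinarith [sq_nonneg (r/(x+1)), inv_pos.mpr hbpos]

/-- Telescoping step: `(x+1)^(-s) ≤ (x^(1-s) - (x+1)^(1-s))/(s-1)`. -/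
lemma step_tel {x s : ℝ} (hx : 1 ≤ x) (hs : 1 < s) :
    (x+1) ^ (-s) ≤ (1/(s-1)) * (x ^ (-(s-1)) - (x+1) ^ (-(s-1))) := by
  set r : ℝ := s - 1 with hrdef
  have hr : 0 < r := by simp [hrdef]; linarith
  have hx0 : (0:ℝ) < x := lt_of_lt_of_le one_pos hx
  have hx1 : (0:ℝ) < x + 1 := by linarith
  have hid : x ^ (-r) = (x+1) ^ (-r) * (1 + 1/x) ^ r := by
    rw [Real.rpow_neg hx1.le, ← Real.inv_rpow hx1.le, ← Real.mul_rpow (by positivity) (by positivity)]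
    rw [Real.rpow_neg hx0.le, ← Real.inv_rpow hx0.le]
    congr 1
    field_simp
  have hsplit : (x+1) ^ (-s) = (x+1) ^ (-r) * (x+1)⁻¹ := by
    rw [← Real.rpow_neg_one (x+1), ← Real.rpow_add hx1]
    congr 1
    simp [hrdef]; ring
  have hpos : (0:ℝ) < (x+1) ^ (-r) := Real.rpow_pos_of_pos hx1 _
  have hkey := key_bern hx hr
  have : x ^ (-r) - (x+1) ^ (-r) ≥ (x+1) ^ (-r) * (r / (x+1)) := by
    rw [hid]
    nlinarith
  rw [hsplit]
  rw [ge_iff_le, mul_div_assoc' , mul_comm, mul_div_assoc] at this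
  rw [one_div, ← div_eq_inv_mul, le_div_iff₀ (by linarith : (0:ℝ) < s - 1)]
  calc (x+1) ^ (-r) * (x+1)⁻¹ * (s-1) = r * ((x+1)^(-r) / (x+1)) := by
        rw [hrdef]; ring
    _ ≤ _ := this

/-- Tail bound for shifted sums. -/
lemma tail_range {s : ℝ} (hs : 1 < s) {N : ℕ} (hN : 1 ≤ N) (n : ℕ) :
    ∑ i ∈ Finset.range n, ((N:ℝ) + 1 + i) ^ (-s) ≤
      (1/(s-1)) * ((N:ℝ) ^ (-(s-1)) - ((N:ℝ) + n) ^ (-(s-1))) := by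
  induction n with
  | zero => simp
  | succ n ih =>
    rw [Finset.sum_range_succ]
    have hNn : (1:ℝ) ≤ (N:ℝ) + n := by
      have : (1:ℝ) ≤ (N:ℝ) := by exact_mod_cast hN
      have : (0:ℝ) ≤ (n:ℝ) := Nat.cast_nonneg n
      linarith [(by exact_mod_cast hN : (1:ℝ) ≤ (N:ℝ))]
    have hstep := step_tel hNn hs
    have e1 : (N:ℝ) + 1 + n = ((N:ℝ) + n) + 1 := by ring
    have e2 : (N:ℝ) + (n+1 : ℕ) = ((N:ℝ) + n) + 1 := by push_cast; ring
    rw [e1, e2]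
    calc _ ≤ (1/(s-1)) * ((N:ℝ) ^ (-(s-1)) - ((N:ℝ) + n) ^ (-(s-1)))
            + (((N:ℝ)+n)+1) ^ (-s) := by linarith
      _ ≤ _ := by linarith [hstep]

/-- Tail bound over an arbitrary finite set of naturals all `≥ N ≥ 1`. -/
lemma tail_finset {s : ℝ} (hs : 1 < s) {N : ℕ} (hN : 1 ≤ N) (t : Finset ℕ)
    (ht : ∀ j ∈ t, N ≤ j) :
    ∑ j ∈ t, (j:ℝ) ^ (-s) ≤ (1 + 1/(s-1)) * (N:ℝ) ^ (-(s-1)) := by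
  have hN0 : (0:ℝ) < (N:ℝ) := by exact_mod_cast hN
  have hNr : (1:ℝ) ≤ (N:ℝ) := by exact_mod_cast hN
  set M := t.sup id with hM
  have hsub : t ⊆ Finset.Icc N M := by
    intro j hj
    exact Finset.mem_Icc.mpr ⟨ht j hj, Finset.le_sup (f := id) hj⟩
  have h1 : ∑ j ∈ t, (j:ℝ) ^ (-s) ≤ ∑ j ∈ Finset.Icc N M, (j:ℝ) ^ (-s) :=
    Finset.sum_le_sum_of_subset_of_nonneg hsub
      (fun j _ _ => Real.rpow_nonneg (Nat.cast_nonneg j) _)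
  refine h1.trans ?_
  have hrhs : (0:ℝ) ≤ (1 + 1/(s-1)) * (N:ℝ) ^ (-(s-1)) := by
    have h0 : (0:ℝ) < s - 1 := by linarith
    have := Real.rpow_nonneg hN0.le (-(s-1))
    positivity
  rcases lt_or_ge M N with hMN | hMN
  · rw [Finset.Icc_eq_empty (by omega)]
    simpa using hrhs
  · have hIcc : Finset.Icc N M = Finset.Ico N (M+1) := (Finset.Ico_add_one_right_eq_Icc N M)
    rw [hIcc, Finset.sum_Ico_eq_sum_range]
    have hk : M + 1 - N = (M - N) + 1 := by omega
    rw [hk, Finset.sum_range_succ']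
    have hfirst : ((N + 0 : ℕ):ℝ) ^ (-s) ≤ (N:ℝ) ^ (-(s-1)) := by
      simp only [Nat.add_zero]
      exact Real.rpow_le_rpow_of_exponent_le hNr (by linarith)
    have htail : ∑ i ∈ Finset.range (M - N), ((N + (i+1) : ℕ):ℝ) ^ (-s)
        ≤ (1/(s-1)) * (N:ℝ) ^ (-(s-1)) := by
      have heq : ∀ i ∈ Finset.range (M - N),
          ((N + (i+1) : ℕ):ℝ) ^ (-s) = ((N:ℝ) + 1 + i) ^ (-s) := by
        intro i _
        congr 1
        push_cast
        ring
      rw [Finset.sum_congr rfl heq]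
      refine (tail_range hs hN (M - N)).trans ?_
      have : (0:ℝ) ≤ ((N:ℝ) + (M - N : ℕ)) ^ (-(s-1)) :=
        Real.rpow_nonneg (by positivity) _
      have h0 : (0:ℝ) < s - 1 := by linarith
      rw [mul_sub]
      have : 0 ≤ (1/(s-1)) * ((N:ℝ) + (M - N : ℕ)) ^ (-(s-1)) := by positivity
      linarith
    rw [add_mul, one_mul]
    linarith

/-- Weighted Hölder bound over a subset of indices whose weights `i+1` are all `≥ N`. -/
lemma holder_weighted {p q : ℝ} (hpq : p.HolderConjugate q) {n : ℕ} (a : Fin n → ℝ)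
    (ha : ∀ i, 0 ≤ a i) (t : Finset (Fin n)) {N : ℕ} (hN : 1 ≤ N)
    (hlow : ∀ i ∈ t, N ≤ (i:ℕ)+1) {B : ℝ} (hB : 0 ≤ B) (hsum : ∑ i ∈ t, a i ^ p ≤ B) :
    ∑ i ∈ t, a i / (((i:ℕ):ℝ)+1) ≤
      B ^ (1/p) * ((1+1/(q-1)) * (N:ℝ) ^ (-(q-1))) ^ (1/q) := by
  have hq1 : 1 < q := hpq.symm.lt
  have h1 : ∀ i ∈ t, a i / (((i:ℕ):ℝ)+1) = a i * ((((i:ℕ):ℝ)+1)⁻¹) := by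
    intro i _; rw [div_eq_mul_inv]
  rw [Finset.sum_congr rfl h1]
  have hH := Real.inner_le_Lp_mul_Lq_of_nonneg t hpq
    (f := a) (g := fun i => (((i:ℕ):ℝ)+1)⁻¹)
    (fun i _ => ha i) (fun i _ => by positivity)
  refine hH.trans ?_
  have hgq : ∑ i ∈ t, ((((i:ℕ):ℝ)+1)⁻¹) ^ q ≤ (1+1/(q-1)) * (N:ℝ) ^ (-(q-1)) := by
    have heq : ∀ i ∈ t, ((((i:ℕ):ℝ)+1)⁻¹) ^ q = (((i:ℕ)+1 : ℕ):ℝ) ^ (-q) := by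
      intro i _
      have hc : (((i:ℕ)+1 : ℕ):ℝ) = ((i:ℕ):ℝ)+1 := by push_cast; ring
      rw [hc, Real.inv_rpow (by positivity), ← Real.rpow_neg (by positivity)]
    rw [Finset.sum_congr rfl heq]
    have hinj : ∀ x ∈ t, ∀ y ∈ t,
        (fun i : Fin n => (i:ℕ)+1) x = (fun i : Fin n => (i:ℕ)+1) y → x = y := by
      intro x _ y _ h; simp only at h; exact Fin.val_injective (by omega)
    have himg := Finset.sum_image (s := t) (g := fun i : Fin n => (i:ℕ)+1) (f := fun k : ℕ => (k:ℝ) ^ (-q)) hinj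
    rw [← himg]
    exact tail_finset hq1 hN _ (by
      intro j hj
      simp only [Finset.mem_image] at hj
      obtain ⟨i, hi, rfl⟩ := hj
      exact hlow i hi)
  have hfp : (∑ i ∈ t, a i ^ p) ^ (1/p) ≤ B ^ (1/p) :=
    Real.rpow_le_rpow (Finset.sum_nonneg fun i _ => Real.rpow_nonneg (ha i) p) hsum
      (one_div_nonneg.mpr hpq.pos.le)
  have hgp : (∑ i ∈ t, ((((i:ℕ):ℝ)+1)⁻¹) ^ q) ^ (1/q) ≤
      ((1+1/(q-1)) * (N:ℝ) ^ (-(q-1))) ^ (1/q) :=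
    Real.rpow_le_rpow (Finset.sum_nonneg fun i _ => Real.rpow_nonneg (by positivity) q)
      hgq (one_div_nonneg.mpr hpq.symm.pos.le)
  exact mul_le_mul hfp hgp (Real.rpow_nonneg
    (Finset.sum_nonneg fun i _ => Real.rpow_nonneg (by positivity) q) _) (by positivity)

/-- Tail bound for sums over `Fin n` with weight `(i+1)^(-s)`. -/
lemma fin_tail {s : ℝ} (hs : 1 < s) {n : ℕ} (t : Finset (Fin n)) :
    ∑ i ∈ t, (((i:ℕ):ℝ)+1) ^ (-s) ≤ (1 + 1/(s-1)) * ((1:ℕ):ℝ) ^ (-(s-1)) := by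
  have heq : ∀ i ∈ t, (((i:ℕ):ℝ)+1) ^ (-s) = (((i:ℕ)+1 : ℕ):ℝ) ^ (-s) := by
    intro i _; congr 1; push_cast; ring
  rw [Finset.sum_congr rfl heq]
  have hinj : ∀ x ∈ t, ∀ y ∈ t,
      (fun i : Fin n => (i:ℕ)+1) x = (fun i : Fin n => (i:ℕ)+1) y → x = y := by
    intro x _ y _ h; simp only at h; exact Fin.val_injective (by omega)
  have himg := Finset.sum_image (s := t) (g := fun i : Fin n => (i:ℕ)+1)
    (f := fun k : ℕ => (k:ℝ) ^ (-s)) hinj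
  rw [← himg]
  refine tail_finset hs le_rfl _ ?_
  intro j hj
  simp only [Finset.mem_image] at hj
  obtain ⟨i, _, rfl⟩ := hj
  omega

/-- `(u+v)^p ≤ 2^p (u^p + v^p)` for nonnegative `u, v` and `0 ≤ p`. -/
lemma add_rpow_le {u v pp : ℝ} (hu : 0 ≤ u) (hv : 0 ≤ v) (hp : 0 ≤ pp) :
    (u + v) ^ pp ≤ 2 ^ pp * (u ^ pp + v ^ pp) := by
  have h1 : u + v ≤ 2 * max u v := by
    rcases max_cases u v with ⟨h, h'⟩ | ⟨h, h'⟩ <;> rw [h] <;> linarith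
  calc (u+v) ^ pp ≤ (2 * max u v) ^ pp :=
        Real.rpow_le_rpow (by linarith) h1 hp
    _ = 2 ^ pp * (max u v) ^ pp :=
        Real.mul_rpow (by norm_num) (le_max_iff.mpr (Or.inl hu))
    _ ≤ 2 ^ pp * (u ^ pp + v ^ pp) := by
        have : (max u v) ^ pp ≤ u ^ pp + v ^ pp := by
          rcases max_cases u v with ⟨h, _⟩ | ⟨h, _⟩ <;> rw [h]
          · nlinarith [Real.rpow_nonneg hv pp]
          · nlinarith [Real.rpow_nonneg hu pp]
        nlinarith [Real.rpow_nonneg (le_trans hu (le_max_left u v)) pp,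
          Real.rpow_nonneg hu pp, Real.rpow_nonneg hv pp,
          Real.rpow_pos_of_pos (by norm_num : (0:ℝ) < 2) pp]

/-- Bound for one "half" of the mixed harmonic double sum. -/
lemma half_bound {p q : ℝ} (hpq : p.HolderConjugate q) {n m : ℕ} (g : Fin n → Fin m → ℝ)
    (hg : ∀ i j, 0 ≤ g i j) (c : Fin n → Fin m → Prop) [∀ i j, Decidable (c i j)]
    (hc : ∀ i j, c i j → (i:ℕ) ≤ (j:ℕ)) {B : ℝ} (hB : 0 ≤ B)
    (hrow : ∀ i, ∑ j, g i j ^ p ≤ B) :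
    ∑ i, ∑ j, (if c i j then g i j / ((((i:ℕ):ℝ)+1) * (((j:ℕ):ℝ)+1)) else 0) ≤
      B ^ (1/p) * (1+1/(q-1)) ^ (1/q) *
        ((1 + 1/((1+1/p)-1)) * ((1:ℕ):ℝ) ^ (-((1+1/p)-1))) := by
  have hp1 : 1 < p := hpq.lt
  have hp0 : 0 < p := hpq.pos
  have hq1 : 1 < q := hpq.symm.lt
  have hq0 : 0 < q := hpq.symm.pos
  have hC0 : (0:ℝ) ≤ 1 + 1/(q-1) := by
    have : (0:ℝ) < q - 1 := by linarith
    positivity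
  have hexp : -(q-1) * (1/q) = -(1/p) := by
    have h := hpq.symm.sub_one_mul_conj  -- (q-1)*p = q
    field_simp
    nlinarith
  have key : ∀ i : Fin n,
      ∑ j, (if c i j then g i j / ((((i:ℕ):ℝ)+1) * (((j:ℕ):ℝ)+1)) else 0) ≤
        B ^ (1/p) * (1+1/(q-1)) ^ (1/q) * (((i:ℕ):ℝ)+1) ^ (-(1+1/p)) := by
    intro i
    set x : ℝ := ((i:ℕ):ℝ) + 1 with hxdef
    have hx0 : (0:ℝ) < x := by positivity
    rw [← Finset.sum_filter]
    have h1 : ∑ j ∈ Finset.univ.filter (fun j => c i j), g i j / (x * (((j:ℕ):ℝ)+1))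
        = (1/x) * ∑ j ∈ Finset.univ.filter (fun j => c i j), g i j / (((j:ℕ):ℝ)+1) := by
      rw [Finset.mul_sum]
      refine Finset.sum_congr rfl fun j _ => ?_
      field_simp
    rw [h1]
    have hinner := holder_weighted hpq (g i) (hg i) (Finset.univ.filter (fun j => c i j))
      (N := (i:ℕ)+1) (by omega)
      (fun j hj => by
        have := hc i j (Finset.mem_filter.mp hj).2
        omega)
      hB
      (le_trans (Finset.sum_le_sum_of_subset_of_nonneg (Finset.filter_subset _ _)
        (fun j _ _ => Real.rpow_nonneg (hg i j) p)) (hrow i))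
    have hcast : (((i:ℕ)+1 : ℕ):ℝ) = x := by rw [hxdef]; push_cast; ring
    rw [hcast] at hinner
    calc (1/x) * ∑ j ∈ Finset.univ.filter (fun j => c i j), g i j / (((j:ℕ):ℝ)+1)
        ≤ (1/x) * (B ^ (1/p) * ((1+1/(q-1)) * x ^ (-(q-1))) ^ (1/q)) := by
          apply mul_le_mul_of_nonneg_left hinner (by positivity)
      _ = B ^ (1/p) * (1+1/(q-1)) ^ (1/q) * x ^ (-(1+1/p)) := by
          rw [Real.mul_rpow hC0 (Real.rpow_nonneg hx0.le _),
            ← Real.rpow_mul hx0.le, hexp,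
            show -(1+1/p) = (-1) + (-(1/p)) by ring, Real.rpow_add hx0,
            Real.rpow_neg_one]
          ring
  calc ∑ i, ∑ j, (if c i j then g i j / ((((i:ℕ):ℝ)+1) * (((j:ℕ):ℝ)+1)) else 0)
      ≤ ∑ i : Fin n, B ^ (1/p) * (1+1/(q-1)) ^ (1/q) * (((i:ℕ):ℝ)+1) ^ (-(1+1/p)) :=
        Finset.sum_le_sum fun i _ => key i
    _ = B ^ (1/p) * (1+1/(q-1)) ^ (1/q) * ∑ i : Fin n, (((i:ℕ):ℝ)+1) ^ (-(1+1/p)) := by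
        rw [Finset.mul_sum]
    _ ≤ _ := by
        apply mul_le_mul_of_nonneg_left
        · exact fin_tail (by nlinarith [one_div_pos.mpr hp0] : (1:ℝ) < 1 + 1/p) Finset.univ
        · have h0 : (0:ℝ) ≤ (1+1/(q-1)) ^ (1/q) := Real.rpow_nonneg hC0 _
          have h1 : (0:ℝ) ≤ B ^ (1/p) := Real.rpow_nonneg hB _
          positivity

end Helpers

/-- for every `p > 1`, `PBV_p ⊆ HBV`. -/
theorem stmt2 (p : ℝ) (hp : 1 < p) (f : ℝ → ℝ → ℝ) (hper : Periodic2 f)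
    (h1 : PV1pow p f ≠ ⊤) (h2 : PV2pow p f ≠ ⊤) :
    HarmonicV f ≠ ⊤ := by
  classical
  have hp0 : 0 < p := lt_trans one_pos hp
  have hpq : p.HolderConjugate (Real.conjExponent p) := Real.HolderConjugate.conjExponent hp
  set q := Real.conjExponent p with hqdef
  have hq1 : 1 < q := hpq.symm.lt
  set B1 := (PV1pow p f).toReal with hB1def
  set B2 := (PV2pow p f).toReal with hB2def
  have hB1nn : 0 ≤ B1 := ENNReal.toReal_nonneg
  have hB2nn : 0 ≤ B2 := ENNReal.toReal_nonneg
  have hbound1 : ∀ y ∈ Icc (0:ℝ) (2*Real.pi), ∀ (n : ℕ) (I : Fin n → ℝ × ℝ),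
      NonoverlapIcc n I → ∑ i, |f (I i).2 y - f (I i).1 y| ^ p ≤ B1 := by
    intro y hy n I hI
    rw [hB1def, ← ENNReal.ofReal_le_iff_le_toReal h1]
    unfold PV1pow
    exact le_iSup_of_le y (le_iSup_of_le hy (le_iSup_of_le n (le_iSup_of_le I
      (le_iSup_of_le hI le_rfl))))
  have hbound2 : ∀ x ∈ Icc (0:ℝ) (2*Real.pi), ∀ (m : ℕ) (J : Fin m → ℝ × ℝ),
      NonoverlapIcc m J → ∑ j, |f x (J j).2 - f x (J j).1| ^ p ≤ B2 := by
    intro x hx m J hJ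
    rw [hB2def, ← ENNReal.ofReal_le_iff_le_toReal h2]
    unfold PV2pow
    exact le_iSup_of_le x (le_iSup_of_le hx (le_iSup_of_le m (le_iSup_of_le J
      (le_iSup_of_le hJ le_rfl))))
  have hmem : ∀ {k : ℕ} {I : Fin k → ℝ × ℝ}, NonoverlapIcc k I → ∀ i,
      (I i).1 ∈ Icc (0:ℝ) (2*Real.pi) ∧ (I i).2 ∈ Icc (0:ℝ) (2*Real.pi) := by
    intro k I hI i
    obtain ⟨h0, hlt, h2⟩ := hI.1 i
    exact ⟨⟨h0, by linarith⟩, ⟨by linarith, h2⟩⟩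
  set C0 : ℝ := 1 + 1/(q-1) with hC0def
  have hC0 : 0 ≤ C0 := by
    have h : (0:ℝ) < q-1 := by linarith
    rw [hC0def]; positivity
  set RA : ℝ := B1 ^ (1/p) * (C0 * ((1:ℕ):ℝ) ^ (-(q-1))) ^ (1/q) with hRAdef
  set RB : ℝ := B2 ^ (1/p) * (C0 * ((1:ℕ):ℝ) ^ (-(q-1))) ^ (1/q) with hRBdef
  set CP : ℝ := (1 + 1/((1+1/p)-1)) * ((1:ℕ):ℝ) ^ (-((1+1/p)-1)) with hCPdef
  set RC : ℝ := (2^p*(B2+B2)) ^ (1/p) * C0 ^ (1/q) * CP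
      + (2^p*(B1+B1)) ^ (1/p) * C0 ^ (1/q) * CP with hRCdef
  have hA : LamV1 (fun n => (n:ℝ)) f ≤ ENNReal.ofReal RA := by
    unfold LamV1
    refine iSup_le fun y => iSup_le fun hy => iSup_le fun n => iSup_le fun I =>
      iSup_le fun hI => ?_
    apply ENNReal.ofReal_le_ofReal
    have h := holder_weighted hpq (fun i => |f (I i).2 y - f (I i).1 y|) (fun i => abs_nonneg _)
      Finset.univ (N := 1) le_rfl (fun i _ => by omega) hB1nn (hbound1 y hy n I hI)
    refine le_trans (le_of_eq (Finset.sum_congr rfl fun i _ => ?_)) h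
    push_cast
    ring
  have hB : LamV2 (fun n => (n:ℝ)) f ≤ ENNReal.ofReal RB := by
    unfold LamV2
    refine iSup_le fun x => iSup_le fun hx => iSup_le fun m => iSup_le fun J =>
      iSup_le fun hJ => ?_
    apply ENNReal.ofReal_le_ofReal
    have h := holder_weighted hpq (fun j => |f x (J j).2 - f x (J j).1|) (fun j => abs_nonneg _)
      Finset.univ (N := 1) le_rfl (fun j _ => by omega) hB2nn (hbound2 x hx m J hJ)
    refine le_trans (le_of_eq (Finset.sum_congr rfl fun j _ => ?_)) h
    push_cast
    ring
  have hC : LamV12 (fun n => (n:ℝ)) f ≤ ENNReal.ofReal RC := by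
    unfold LamV12
    refine iSup_le fun n => iSup_le fun m => iSup_le fun I => iSup_le fun J =>
      iSup_le fun hI => iSup_le fun hJ => ?_
    apply ENNReal.ofReal_le_ofReal
    set g : Fin n → Fin m → ℝ := fun i j =>
      |f (I i).1 (J j).1 - f (I i).1 (J j).2 - f (I i).2 (J j).1 + f (I i).2 (J j).2| with hgdef
    have hg : ∀ i j, 0 ≤ g i j := fun i j => abs_nonneg _
    have h2p : (0:ℝ) ≤ 2^p := Real.rpow_nonneg (by norm_num) p
    have hrow : ∀ i, ∑ j, g i j ^ p ≤ 2^p*(B2+B2) := by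
      intro i
      obtain ⟨hm1, hm2⟩ := hmem hI i
      calc ∑ j, g i j ^ p
          ≤ ∑ j, 2^p * (|f (I i).2 (J j).2 - f (I i).2 (J j).1| ^ p
              + |f (I i).1 (J j).2 - f (I i).1 (J j).1| ^ p) := by
            refine Finset.sum_le_sum fun j _ => ?_
            refine le_trans (Real.rpow_le_rpow (abs_nonneg _) ?_ hp0.le)
              (add_rpow_le (abs_nonneg _) (abs_nonneg _) hp0.le)
            rw [hgdef]
            simp only []
            rw [show f (I i).1 (J j).1 - f (I i).1 (J j).2 - f (I i).2 (J j).1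
                  + f (I i).2 (J j).2
                = (f (I i).2 (J j).2 - f (I i).2 (J j).1)
                  - (f (I i).1 (J j).2 - f (I i).1 (J j).1) by ring]
            exact abs_sub _ _
        _ = 2^p * ((∑ j, |f (I i).2 (J j).2 - f (I i).2 (J j).1| ^ p)
              + ∑ j, |f (I i).1 (J j).2 - f (I i).1 (J j).1| ^ p) := by
            rw [← Finset.mul_sum, Finset.sum_add_distrib]
        _ ≤ 2^p*(B2+B2) := by
            have t1 := hbound2 (I i).2 hm2 m J hJ
            have t2 := hbound2 (I i).1 hm1 m J hJ
            exact mul_le_mul_of_nonneg_left (add_le_add t1 t2) h2p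
    have hcol : ∀ j, ∑ i, g i j ^ p ≤ 2^p*(B1+B1) := by
      intro j
      obtain ⟨hm1, hm2⟩ := hmem hJ j
      calc ∑ i, g i j ^ p
          ≤ ∑ i, 2^p * (|f (I i).2 (J j).2 - f (I i).1 (J j).2| ^ p
              + |f (I i).2 (J j).1 - f (I i).1 (J j).1| ^ p) := by
            refine Finset.sum_le_sum fun i _ => ?_
            refine le_trans (Real.rpow_le_rpow (abs_nonneg _) ?_ hp0.le)
              (add_rpow_le (abs_nonneg _) (abs_nonneg _) hp0.le)
            rw [hgdef]
            simp only []
            rw [show f (I i).1 (J j).1 - f (I i).1 (J j).2 - f (I i).2 (J j).1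
                  + f (I i).2 (J j).2
                = (f (I i).2 (J j).2 - f (I i).1 (J j).2)
                  - (f (I i).2 (J j).1 - f (I i).1 (J j).1) by ring]
            exact abs_sub _ _
        _ = 2^p * ((∑ i, |f (I i).2 (J j).2 - f (I i).1 (J j).2| ^ p)
              + ∑ i, |f (I i).2 (J j).1 - f (I i).1 (J j).1| ^ p) := by
            rw [← Finset.mul_sum, Finset.sum_add_distrib]
        _ ≤ 2^p*(B1+B1) := by
            have t1 := hbound1 (J j).2 hm2 n I hI
            have t2 := hbound1 (J j).1 hm1 n I hI
            exact mul_le_mul_of_nonneg_left (add_le_add t1 t2) h2p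
    have hpt : ∀ (i : Fin n) (j : Fin m),
        g i j / ((fun k : ℕ => (k:ℝ)) ((i:ℕ)+1) * (fun k : ℕ => (k:ℝ)) ((j:ℕ)+1))
          = (if (i:ℕ) ≤ (j:ℕ) then g i j / ((((i:ℕ):ℝ)+1) * (((j:ℕ):ℝ)+1)) else 0)
            + (if (j:ℕ) < (i:ℕ) then g i j / ((((i:ℕ):ℝ)+1) * (((j:ℕ):ℝ)+1)) else 0) := by
      intro i j
      have hci : (((i:ℕ)+1:ℕ):ℝ) = ((i:ℕ):ℝ)+1 := by push_cast; ring
      have hcj : (((j:ℕ)+1:ℕ):ℝ) = ((j:ℕ):ℝ)+1 := by push_cast; ring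
      simp only []
      rcases le_or_gt (i:ℕ) (j:ℕ) with h | h
      · rw [if_pos h, if_neg (by omega), add_zero, hci, hcj]
      · rw [if_neg (by omega), if_pos h, zero_add, hci, hcj]
    calc ∑ i : Fin n, ∑ j : Fin m,
          g i j / ((fun k : ℕ => (k:ℝ)) ((i:ℕ)+1) * (fun k : ℕ => (k:ℝ)) ((j:ℕ)+1))
        = (∑ i : Fin n, ∑ j : Fin m, (if (i:ℕ) ≤ (j:ℕ) then
              g i j / ((((i:ℕ):ℝ)+1) * (((j:ℕ):ℝ)+1)) else 0))
          + ∑ i : Fin n, ∑ j : Fin m, (if (j:ℕ) < (i:ℕ) then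
              g i j / ((((i:ℕ):ℝ)+1) * (((j:ℕ):ℝ)+1)) else 0) := by
          rw [← Finset.sum_add_distrib]
          refine Finset.sum_congr rfl fun i _ => ?_
          rw [← Finset.sum_add_distrib]
          exact Finset.sum_congr rfl fun j _ => hpt i j
      _ ≤ RC := by
          rw [hRCdef]
          have hT1 := half_bound hpq g hg (fun i j => (i:ℕ) ≤ (j:ℕ))
            (fun i j h => h) (by positivity) hrow
          have hT2' := half_bound hpq (fun (j : Fin m) (i : Fin n) => g i j)
            (fun j i => hg i j) (fun j i => (j:ℕ) < (i:ℕ))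
            (fun j i h => le_of_lt h) (by positivity) hcol
          have hswap : ∑ i : Fin n, ∑ j : Fin m, (if (j:ℕ) < (i:ℕ) then
                g i j / ((((i:ℕ):ℝ)+1) * (((j:ℕ):ℝ)+1)) else 0)
              = ∑ (j : Fin m), ∑ (i : Fin n), (if (j:ℕ) < (i:ℕ) then
                g i j / ((((j:ℕ):ℝ)+1) * (((i:ℕ):ℝ)+1)) else 0) := by
            rw [Finset.sum_comm]
            refine Finset.sum_congr rfl fun j _ => Finset.sum_congr rfl fun i _ => ?_
            rw [mul_comm ((((i:ℕ):ℝ)+1)) ((((j:ℕ):ℝ)+1))]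
          rw [hswap]
          have e1 : (1+1/(q-1)) = C0 := hC0def.symm
          have e2 : ((1 + 1/((1+1/p)-1)) * ((1:ℕ):ℝ) ^ (-((1+1/p)-1))) = CP := hCPdef.symm
          rw [e1, e2] at hT1 hT2'
          exact add_le_add hT1 hT2'
  have hfin : ∀ {X : ℝ≥0∞} {r : ℝ}, X ≤ ENNReal.ofReal r → X ≠ ⊤ :=
    fun h => (lt_of_le_of_lt h ENNReal.ofReal_lt_top).ne
  unfold HarmonicV
  exact ENNReal.add_ne_top.mpr ⟨ENNReal.add_ne_top.mpr ⟨hfin hA, hfin hB⟩, hfin hC⟩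
end

section
/- Let f : ℝ² → ℝ be 2π-periodic in each variable and suppose Σ_{n=1}^∞ √(v_j(n,f)) / n^{3/2} < ∞ for j = 1,2, where v₁, v₂ are the partial moduli of variation of f. Then f ∈ HBV. -/
section DWcore
open Finset

/-- harmonic number -/
noncomputable def Hsum (R : ℕ) : ℝ := ∑ t ∈ range R, 1/((t:ℝ)+1)

lemma Hsum_nonneg (R : ℕ) : 0 ≤ Hsum R := by
  apply sum_nonneg; intro t _; positivity

lemma one_le_Hsum {R : ℕ} (hR : 1 ≤ R) : 1 ≤ Hsum R := by
  calc (1:ℝ) = ∑ t ∈ range 1, 1/((t:ℝ)+1) := by simp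
  _ ≤ Hsum R := by
    apply sum_le_sum_of_subset_of_nonneg (by simpa using (show 0 < R by omega))
    intro t _ _; positivity

/-- sum of an antitone nonneg function over a finset of naturals of card ≤ R -/
lemma sum_antitone_le {u : ℕ → ℝ} (hu : Antitone u) (hu0 : ∀ t, 0 ≤ u t)
    (s : Finset ℕ) {R : ℕ} (hs : s.card ≤ R) :
    ∑ i ∈ s, u i ≤ ∑ t ∈ range R, u t := by
  have key : ∀ (c : ℕ) (s : Finset ℕ), s.card = c → ∑ i ∈ s, u i ≤ ∑ t ∈ range c, u t := by
    intro c
    induction c with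
    | zero => intro s hs; rw [Finset.card_eq_zero.mp hs]; simp
    | succ c ih =>
      intro s hs
      have hne : s.Nonempty := by
        rw [← Finset.card_pos, hs]; omega
      set M := s.max' hne with hM
      have hMs : M ∈ s := s.max'_mem hne
      have hsub : s ⊆ range (M+1) := by
        intro x hx
        simp only [mem_range]
        exact Nat.lt_succ_of_le (s.le_max' x hx)
      have hcard : c + 1 ≤ M + 1 := by
        rw [← hs]; simpa using Finset.card_le_card hsub
      have hcM : c ≤ M := by omega
      have herase : (s.erase M).card = c := by
        rw [Finset.card_erase_of_mem hMs, hs]; omega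
      calc ∑ i ∈ s, u i = ∑ i ∈ s.erase M, u i + u M := by
            rw [← Finset.sum_erase_add s u hMs]
        _ ≤ ∑ t ∈ range c, u t + u c := add_le_add (ih _ herase) (hu hcM)
        _ = ∑ t ∈ range (c+1), u t := (Finset.sum_range_succ u c).symm
  calc ∑ i ∈ s, u i ≤ ∑ t ∈ range s.card, u t := key _ s rfl
    _ ≤ ∑ t ∈ range R, u t := by
        apply sum_le_sum_of_subset_of_nonneg (by simp [hs])
        intro t _ _; exact hu0 t

lemma Hsum_card_bound (s : Finset ℕ) {R : ℕ} (hs : s.card ≤ R) :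
    ∑ i ∈ s, 1/((i:ℝ)+1) ≤ Hsum R := by
  apply sum_antitone_le _ _ s hs
  · intro a b hab
    apply div_le_div_of_nonneg_left one_pos.le (by positivity)
    · exact_mod_cast by exact_mod_cast add_le_add (Nat.cast_le.mpr hab) le_rfl
  · intro t; positivity

/-- tail of inverse squares -/
lemma tail_inv_sq (s : Finset ℕ) {S : ℕ} (hS : 1 ≤ S) (h : ∀ t ∈ s, S ≤ t) :
    ∑ t ∈ s, 1/(((t:ℝ)+1)*((t:ℝ)+1)) ≤ 1/(S:ℝ) := by
  rcases s.eq_empty_or_nonempty with he | hne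
  · simp only [he, sum_empty]; positivity
  set N := (s.sup id) + 1 with hN
  have hsub : s ⊆ Ico S N := by
    intro t ht
    rw [mem_Ico]
    exact ⟨h t ht, by simpa [hN] using Nat.lt_succ_of_le (Finset.le_sup (f := id) ht)⟩
  have hterm : ∀ t ∈ Ico S N, 1/(((t:ℝ)+1)*((t:ℝ)+1)) ≤ 1/(t:ℝ) - 1/((t:ℝ)+1) := by
    intro t ht
    have ht1 : (1:ℝ) ≤ (t:ℝ) := by
      have := (mem_Ico.mp ht).1; exact_mod_cast le_trans hS this
    have htpos : (0:ℝ) < t := by linarith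
    rw [div_sub_div _ _ (ne_of_gt htpos) (by positivity), one_mul, mul_one]
    have : (t:ℝ) + 1 - t = 1 := by ring
    rw [this]
    apply div_le_div_of_nonneg_left one_pos.le (by positivity)
    nlinarith
  have hmono : ∑ t ∈ s, 1/(((t:ℝ)+1)*((t:ℝ)+1)) ≤ ∑ t ∈ Ico S N, (1/(t:ℝ) - 1/((t:ℝ)+1)) := by
    calc ∑ t ∈ s, 1/(((t:ℝ)+1)*((t:ℝ)+1)) ≤ ∑ t ∈ s, (1/(t:ℝ) - 1/((t:ℝ)+1)) := by
          apply sum_le_sum; intro t ht; exact hterm t (hsub ht)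
      _ ≤ ∑ t ∈ Ico S N, (1/(t:ℝ) - 1/((t:ℝ)+1)) := by
          apply sum_le_sum_of_subset_of_nonneg hsub
          intro t ht _
          have ht1 : (1:ℝ) ≤ (t:ℝ) := by
            have := (mem_Ico.mp ht).1; exact_mod_cast le_trans hS this
          have h1 : 1/((t:ℝ)+1) ≤ 1/(t:ℝ) := by
            apply div_le_div_of_nonneg_left one_pos.le (by linarith) (by linarith)
          linarith
  have hSN : S ≤ N := by
    obtain ⟨x, hx⟩ := hne
    exact le_trans (h x hx) (le_of_lt (mem_Ico.mp (hsub hx)).2)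
  have htel : ∑ t ∈ Ico S N, (1/(t:ℝ) - 1/((t:ℝ)+1)) = 1/(S:ℝ) - 1/(N:ℝ) := by
    have f0 : ∀ n : ℕ, ∑ t ∈ range n, (1/(t:ℝ) - 1/((t:ℝ)+1)) = 1/((0:ℕ):ℝ) - 1/(n:ℝ) := by
      intro n
      have := Finset.sum_range_sub' (fun t : ℕ => 1/(t:ℝ)) n
      simpa using this
    rw [Finset.sum_Ico_eq_sub _ hSN, f0, f0]
    simp
    ring
  rw [htel] at hmono
  have : (0:ℝ) ≤ 1/(N:ℝ) := by positivity
  linarith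

lemma half_bound_s3 (P : Finset (ℕ × ℕ)) (R S : ℕ) (hR : 1 ≤ R) (hS : 1 ≤ S)
    (hcol : ∀ j : ℕ, (P.filter (fun p => p.2 = j)).card ≤ R)
    (hside : ∀ p ∈ P, (p.2+1) * R ≤ (p.1+1) * S) :
    ∑ p ∈ P, (1:ℝ)/(((p.1:ℝ)+1)*((p.2:ℝ)+1)) ≤ Hsum R * Hsum S + 1 := by
  classical
  set J := P.image Prod.snd with hJ
  have hmaps : ∀ p ∈ P, p.2 ∈ J := fun p hp => Finset.mem_image_of_mem _ hp
  have step1 : ∑ p ∈ P, (1:ℝ)/(((p.1:ℝ)+1)*((p.2:ℝ)+1))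
      = ∑ j ∈ J, ∑ p ∈ P.filter (fun p => p.2 = j), (1:ℝ)/(((p.1:ℝ)+1)*((p.2:ℝ)+1)) :=
    (Finset.sum_fiberwise_of_maps_to hmaps _).symm
  have fib_eq : ∀ j : ℕ, ∑ p ∈ P.filter (fun p => p.2 = j), (1:ℝ)/(((p.1:ℝ)+1)*((p.2:ℝ)+1))
      = (1/((j:ℝ)+1)) * ∑ p ∈ P.filter (fun p => p.2 = j), (1:ℝ)/((p.1:ℝ)+1) := by
    intro j
    rw [Finset.mul_sum]
    apply Finset.sum_congr rfl
    intro p hp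
    have : p.2 = j := (Finset.mem_filter.mp hp).2
    rw [this]
    field_simp
  have colsum_nonneg : ∀ j : ℕ, 0 ≤ ∑ p ∈ P.filter (fun p => p.2 = j), (1:ℝ)/((p.1:ℝ)+1) := by
    intro j; apply sum_nonneg; intro p _; positivity
  have CB1 : ∀ j : ℕ, ∑ p ∈ P.filter (fun p => p.2 = j), (1:ℝ)/((p.1:ℝ)+1) ≤ Hsum R := by
    intro j
    have hinj : ∀ x ∈ P.filter (fun p => p.2 = j), ∀ y ∈ P.filter (fun p => p.2 = j),
        x.1 = y.1 → x = y := by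
      intro x hx y hy hxy
      have hx2 : x.2 = j := (Finset.mem_filter.mp hx).2
      have hy2 : y.2 = j := (Finset.mem_filter.mp hy).2
      exact Prod.ext hxy (hx2.trans hy2.symm)
    have := Finset.sum_image (s := P.filter (fun p => p.2 = j)) (g := Prod.fst)
      (f := fun i : ℕ => (1:ℝ)/((i:ℝ)+1)) (fun x hx y hy hxy => hinj x hx y hy hxy)
    rw [← this]
    apply Hsum_card_bound
    calc ((P.filter (fun p => p.2 = j)).image Prod.fst).card
        ≤ (P.filter (fun p => p.2 = j)).card := Finset.card_image_le
      _ ≤ R := hcol j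
  have CB2 : ∀ j : ℕ, S ≤ j → ∑ p ∈ P.filter (fun p => p.2 = j), (1:ℝ)/((p.1:ℝ)+1)
      ≤ (S:ℝ)/((j:ℝ)+1) := by
    intro j _
    have hterm : ∀ p ∈ P.filter (fun p => p.2 = j), (1:ℝ)/((p.1:ℝ)+1) ≤ (S:ℝ)/(((j:ℝ)+1)*R) := by
      intro p hp
      have hpP : p ∈ P := (Finset.mem_filter.mp hp).1
      have hp2 : p.2 = j := (Finset.mem_filter.mp hp).2
      have hs := hside p hpP
      rw [hp2] at hs
      rw [div_le_div_iff₀ (by positivity) (by positivity)]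
      have : ((j:ℝ)+1) * R ≤ ((p.1:ℝ)+1) * S := by exact_mod_cast hs
      linarith
    calc ∑ p ∈ P.filter (fun p => p.2 = j), (1:ℝ)/((p.1:ℝ)+1)
        ≤ ∑ _p ∈ P.filter (fun p => p.2 = j), (S:ℝ)/(((j:ℝ)+1)*R) := sum_le_sum hterm
      _ = (P.filter (fun p => p.2 = j)).card * ((S:ℝ)/(((j:ℝ)+1)*R)) := by
          rw [Finset.sum_const, nsmul_eq_mul]
      _ ≤ (R:ℝ) * ((S:ℝ)/(((j:ℝ)+1)*R)) := by
          apply mul_le_mul_of_nonneg_right _ (by positivity)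
          exact_mod_cast hcol j
      _ = (S:ℝ)/((j:ℝ)+1) := by
          have hRpos : (0:ℝ) < R := by exact_mod_cast hR
          field_simp
  rw [step1]
  have split : ∑ j ∈ J, ∑ p ∈ P.filter (fun p => p.2 = j), (1:ℝ)/(((p.1:ℝ)+1)*((p.2:ℝ)+1))
      = ∑ j ∈ J.filter (fun j => j < S), (1/((j:ℝ)+1)) * ∑ p ∈ P.filter (fun p => p.2 = j), (1:ℝ)/((p.1:ℝ)+1)
      + ∑ j ∈ J.filter (fun j => ¬ j < S), (1/((j:ℝ)+1)) * ∑ p ∈ P.filter (fun p => p.2 = j), (1:ℝ)/((p.1:ℝ)+1) := by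
    rw [← Finset.sum_filter_add_sum_filter_not J (fun j => j < S)]
    congr 1 <;> exact Finset.sum_congr rfl (fun j _ => fib_eq j)
  rw [split]
  have partA : ∑ j ∈ J.filter (fun j => j < S), (1/((j:ℝ)+1)) * ∑ p ∈ P.filter (fun p => p.2 = j), (1:ℝ)/((p.1:ℝ)+1)
      ≤ Hsum R * Hsum S := by
    calc ∑ j ∈ J.filter (fun j => j < S), (1/((j:ℝ)+1)) * ∑ p ∈ P.filter (fun p => p.2 = j), (1:ℝ)/((p.1:ℝ)+1)
        ≤ ∑ j ∈ J.filter (fun j => j < S), (1/((j:ℝ)+1)) * Hsum R := by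
          apply sum_le_sum
          intro j _
          exact mul_le_mul_of_nonneg_left (CB1 j) (by positivity)
      _ = Hsum R * ∑ j ∈ J.filter (fun j => j < S), (1/((j:ℝ)+1)) := by
          rw [Finset.mul_sum]; apply Finset.sum_congr rfl; intro j _; ring
      _ ≤ Hsum R * Hsum S := by
          apply mul_le_mul_of_nonneg_left _ (Hsum_nonneg R)
          apply Hsum_card_bound
          calc (J.filter (fun j => j < S)).card ≤ (range S).card := by
                apply Finset.card_le_card
                intro j hj
                simp only [mem_range]
                exact (Finset.mem_filter.mp hj).2
            _ = S := card_range S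
  have partB : ∑ j ∈ J.filter (fun j => ¬ j < S), (1/((j:ℝ)+1)) * ∑ p ∈ P.filter (fun p => p.2 = j), (1:ℝ)/((p.1:ℝ)+1)
      ≤ 1 := by
    calc ∑ j ∈ J.filter (fun j => ¬ j < S), (1/((j:ℝ)+1)) * ∑ p ∈ P.filter (fun p => p.2 = j), (1:ℝ)/((p.1:ℝ)+1)
        ≤ ∑ j ∈ J.filter (fun j => ¬ j < S), (1/((j:ℝ)+1)) * ((S:ℝ)/((j:ℝ)+1)) := by
          apply sum_le_sum
          intro j hj
          have hjS : S ≤ j := Nat.le_of_not_lt (Finset.mem_filter.mp hj).2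
          exact mul_le_mul_of_nonneg_left (CB2 j hjS) (by positivity)
      _ = (S:ℝ) * ∑ j ∈ J.filter (fun j => ¬ j < S), 1/(((j:ℝ)+1)*((j:ℝ)+1)) := by
          rw [Finset.mul_sum]; apply Finset.sum_congr rfl; intro j _
          field_simp
      _ ≤ (S:ℝ) * (1/(S:ℝ)) := by
          apply mul_le_mul_of_nonneg_left _ (by positivity)
          apply tail_inv_sq _ hS
          intro j hj
          exact Nat.le_of_not_lt (Finset.mem_filter.mp hj).2
      _ = 1 := by
          have : (0:ℝ) < S := by exact_mod_cast hS
          field_simp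
  linarith

lemma grid_bound (P : Finset (ℕ × ℕ)) (R S : ℕ) (hR : 1 ≤ R) (hS : 1 ≤ S)
    (hcol : ∀ j : ℕ, (P.filter (fun p => p.2 = j)).card ≤ R)
    (hrow : ∀ i : ℕ, (P.filter (fun p => p.1 = i)).card ≤ S) :
    ∑ p ∈ P, (1:ℝ)/(((p.1:ℝ)+1)*((p.2:ℝ)+1)) ≤ 4 * (Hsum R * Hsum S) := by
  classical
  rw [← Finset.sum_filter_add_sum_filter_not P (fun p => (p.2+1) * R ≤ (p.1+1) * S)]
  set A := P.filter (fun p => (p.2+1) * R ≤ (p.1+1) * S) with hA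
  set B := P.filter (fun p => ¬ (p.2+1) * R ≤ (p.1+1) * S) with hB
  have boundA : ∑ p ∈ A, (1:ℝ)/(((p.1:ℝ)+1)*((p.2:ℝ)+1)) ≤ Hsum R * Hsum S + 1 := by
    apply half_bound_s3 A R S hR hS
    · intro j
      calc (A.filter (fun p => p.2 = j)).card ≤ (P.filter (fun p => p.2 = j)).card := by
            apply Finset.card_le_card
            intro p hp
            rw [Finset.mem_filter] at hp ⊢
            exact ⟨(Finset.mem_filter.mp hp.1).1, hp.2⟩
        _ ≤ R := hcol j
    · intro p hp
      exact (Finset.mem_filter.mp hp).2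
  have boundB : ∑ p ∈ B, (1:ℝ)/(((p.1:ℝ)+1)*((p.2:ℝ)+1)) ≤ Hsum S * Hsum R + 1 := by
    have himg : ∑ p ∈ B.image Prod.swap, (1:ℝ)/(((p.1:ℝ)+1)*((p.2:ℝ)+1))
        = ∑ p ∈ B, (1:ℝ)/(((p.2:ℝ)+1)*((p.1:ℝ)+1)) := by
      apply Finset.sum_image
      intro x _ y _ hxy
      exact Prod.swap_injective hxy
    have : ∑ p ∈ B, (1:ℝ)/(((p.1:ℝ)+1)*((p.2:ℝ)+1))
        = ∑ p ∈ B.image Prod.swap, (1:ℝ)/(((p.1:ℝ)+1)*((p.2:ℝ)+1)) := by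
      rw [himg]; apply Finset.sum_congr rfl; intro p _; rw [mul_comm]
    rw [this]
    apply half_bound_s3 _ S R hS hR
    · intro i
      have : (B.image Prod.swap).filter (fun p => p.2 = i)
          = (B.filter (fun p => p.1 = i)).image Prod.swap := by
        ext q
        simp only [Finset.mem_filter, Finset.mem_image]
        constructor
        · rintro ⟨⟨p, hp, rfl⟩, hq2⟩
          exact ⟨p, ⟨hp, hq2⟩, rfl⟩
        · rintro ⟨p, ⟨hp, hp1⟩, rfl⟩
          exact ⟨⟨p, hp, rfl⟩, hp1⟩
      rw [this]
      calc ((B.filter (fun p => p.1 = i)).image Prod.swap).card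
          ≤ (B.filter (fun p => p.1 = i)).card := Finset.card_image_le
        _ ≤ (P.filter (fun p => p.1 = i)).card := by
            apply Finset.card_le_card
            intro p hp
            rw [Finset.mem_filter] at hp ⊢
            exact ⟨(Finset.mem_filter.mp hp.1).1, hp.2⟩
        _ ≤ S := hrow i
    · intro q hq
      obtain ⟨p, hp, rfl⟩ := Finset.mem_image.mp hq
      have := (Finset.mem_filter.mp hp).2
      simp only [Prod.fst_swap, Prod.snd_swap]
      omega
  have h1 : (1:ℝ) ≤ Hsum R * Hsum S := by
    have := mul_le_mul (one_le_Hsum hR) (one_le_Hsum hS) one_pos.le (Hsum_nonneg R)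
    linarith
  have hc : Hsum S * Hsum R = Hsum R * Hsum S := mul_comm _ _
  linarith

lemma exists_sort_perm (n : ℕ) (a : Fin n → ℝ) (v : ℕ → ℝ)
    (hv : ∀ (k : ℕ) (e : Fin k ↪ Fin n), ∑ l, a (e l) ≤ v k) :
    ∃ τ : Equiv.Perm (Fin n), Antitone (a ∘ τ) ∧
      ∀ k : Fin n, a (τ k) ≤ v ((k:ℕ)+1) / ((k:ℕ)+1) := by
  refine ⟨Tuple.sort (fun i => -(a i)), ?_, ?_⟩
  · intro x y hxy
    have := Tuple.monotone_sort (fun i => -(a i)) hxy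
    simpa using this
  · intro k
    set τ := Tuple.sort (fun i => -(a i)) with hτ
    have hanti : Antitone (a ∘ τ) := by
      intro x y hxy
      have := Tuple.monotone_sort (fun i => -(a i)) hxy
      simpa using this
    have hk1 : (k:ℕ)+1 ≤ n := k.2
    have hsum := hv ((k:ℕ)+1) ((Fin.castLEEmb hk1).trans τ.toEmbedding)
    have hlow : ∀ l : Fin ((k:ℕ)+1), a (τ k) ≤ a (τ (Fin.castLE hk1 l)) := by
      intro l
      apply hanti
      rw [Fin.le_def]
      simp only [Fin.coe_castLE]
      omega
    have hmul : (((k:ℕ):ℝ)+1) * a (τ k) ≤ v ((k:ℕ)+1) := by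
      calc (((k:ℕ):ℝ)+1) * a (τ k) = ∑ _l : Fin ((k:ℕ)+1), a (τ k) := by
            rw [Finset.sum_const, Finset.card_univ, Fintype.card_fin, nsmul_eq_mul]
            push_cast; ring
        _ ≤ ∑ l : Fin ((k:ℕ)+1), a (τ (Fin.castLE hk1 l)) :=
            Finset.sum_le_sum (fun l _ => hlow l)
        _ ≤ v ((k:ℕ)+1) := by
            refine le_trans (le_of_eq ?_) hsum
            apply Finset.sum_congr rfl
            intro l _
            rfl
    rw [le_div_iff₀ (by positivity)]
    linarith

lemma sort_bound (n : ℕ) (a : Fin n → ℝ) (v : ℕ → ℝ)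
    (hv : ∀ (k : ℕ) (e : Fin k ↪ Fin n), ∑ l, a (e l) ≤ v k) :
    ∑ i, a i / ((i:ℝ)+1) ≤ ∑ k ∈ range n, v (k+1) / (((k:ℝ)+1)*((k:ℝ)+1)) := by
  obtain ⟨τ, hanti, hrank⟩ := exists_sort_perm n a v hv
  have hmono : Monovary (fun i : Fin n => 1/(((i:ℕ):ℝ)+1)) (a ∘ τ) := by
    intro i j hij
    have hji : j ≤ i := by
      by_contra hc
      push_neg at hc
      exact absurd (hanti hc.le) (not_le.mpr hij)
    apply div_le_div_of_nonneg_left one_pos.le (by positivity)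
    have : (j:ℕ) ≤ (i:ℕ) := hji
    exact_mod_cast add_le_add (Nat.cast_le.mpr this) (le_refl (1:ℝ))
  have hre := hmono.sum_mul_comp_perm_le_sum_mul (σ := τ⁻¹)
  have lhs_eq : ∑ i : Fin n, a i / (((i:ℕ):ℝ)+1)
      = ∑ i : Fin n, (1/(((i:ℕ):ℝ)+1)) * (a ∘ τ) (τ⁻¹ i) := by
    apply Finset.sum_congr rfl
    intro i _
    simp [div_eq_mul_inv, mul_comm]
  calc ∑ i : Fin n, a i / (((i:ℕ):ℝ)+1) = ∑ i : Fin n, (1/(((i:ℕ):ℝ)+1)) * (a ∘ τ) (τ⁻¹ i) := lhs_eq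
    _ ≤ ∑ i : Fin n, (1/(((i:ℕ):ℝ)+1)) * (a ∘ τ) i := hre
    _ ≤ ∑ i : Fin n, (1/(((i:ℕ):ℝ)+1)) * (v ((i:ℕ)+1) / (((i:ℕ):ℝ)+1)) := by
        apply Finset.sum_le_sum
        intro i _
        exact mul_le_mul_of_nonneg_left (hrank i) (by positivity)
    _ = ∑ k ∈ range n, v (k+1) / (((k:ℝ)+1)*((k:ℝ)+1)) := by
        rw [← Fin.sum_univ_eq_sum_range (fun k => v (k+1) / (((k:ℝ)+1)*((k:ℝ)+1))) n]
        apply Finset.sum_congr rfl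
        intro i _
        field_simp

lemma filter_le_range {n k : ℕ} : (range n).filter (fun t => k ≤ t) = Ico k n := by
  ext t; simp only [mem_Ico, mem_filter, mem_range]; omega

lemma filter_le_range' {n k : ℕ} (h : k < n) : (range n).filter (fun t => t ≤ k) = range (k+1) := by
  ext t; simp only [mem_filter, mem_range]; omega

lemma tel_sum {n : ℕ} (g : ℕ → ℝ) (hg : g n = 0) {r : ℕ} (hr : r < n) :
    ∑ k ∈ range n, (if r ≤ k then g k - g (k+1) else 0) = g r := by
  rw [← Finset.sum_filter, filter_le_range,
    Finset.sum_Ico_eq_sub _ (le_of_lt hr), Finset.sum_range_sub' g, Finset.sum_range_sub' g, hg]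
  ring

lemma abel_sum {n : ℕ} (g : ℕ → ℝ) (hg : g n = 0) :
    ∑ k ∈ range n, (g k - g (k+1)) * Hsum (k+1) = ∑ t ∈ range n, g t * (1/((t:ℝ)+1)) := by
  have hH : ∀ k ∈ range n, (g k - g (k+1)) * Hsum (k+1)
      = ∑ t ∈ range n, (if t ≤ k then (g k - g (k+1)) * (1/((t:ℝ)+1)) else 0) := by
    intro k hk
    have : Hsum (k+1) = ∑ t ∈ range n, (if t ≤ k then 1/((t:ℝ)+1) else 0) := by
      rw [← Finset.sum_filter, filter_le_range' (mem_range.mp hk)]; rfl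
    rw [this, Finset.mul_sum]
    apply Finset.sum_congr rfl
    intro t _
    by_cases h : t ≤ k <;> simp [h]
  rw [Finset.sum_congr rfl hH, Finset.sum_comm]
  apply Finset.sum_congr rfl
  intro t ht
  have : ∑ k ∈ range n, (if t ≤ k then (g k - g (k+1)) * (1/((t:ℝ)+1)) else 0)
      = (∑ k ∈ range n, (if t ≤ k then (g k - g (k+1)) else 0)) * (1/((t:ℝ)+1)) := by
    rw [Finset.sum_mul]
    apply Finset.sum_congr rfl
    intro k _
    by_cases h : t ≤ k <;> simp [h]
  rw [this, tel_sum g hg (mem_range.mp ht)]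

lemma sum_swap4 {α β : Type*} [Fintype α] [Fintype β] (s : Finset ℕ) (t : Finset ℕ)
    (F : α → β → ℕ → ℕ → ℝ) :
    ∑ i : α, ∑ j : β, ∑ k ∈ s, ∑ l ∈ t, F i j k l
      = ∑ k ∈ s, ∑ l ∈ t, ∑ i : α, ∑ j : β, F i j k l := by
  calc ∑ i : α, ∑ j : β, ∑ k ∈ s, ∑ l ∈ t, F i j k l
      = ∑ i : α, ∑ k ∈ s, ∑ j : β, ∑ l ∈ t, F i j k l :=
        Finset.sum_congr rfl (fun i _ => Finset.sum_comm)
    _ = ∑ k ∈ s, ∑ i : α, ∑ j : β, ∑ l ∈ t, F i j k l := Finset.sum_comm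
    _ = ∑ k ∈ s, ∑ i : α, ∑ l ∈ t, ∑ j : β, F i j k l :=
        Finset.sum_congr rfl (fun k _ => Finset.sum_congr rfl (fun i _ => Finset.sum_comm))
    _ = ∑ k ∈ s, ∑ l ∈ t, ∑ i : α, ∑ j : β, F i j k l :=
        Finset.sum_congr rfl (fun k _ => Finset.sum_comm)

lemma mixed_bound (n m : ℕ) (a : Fin n → Fin m → ℝ) (ha : ∀ i j, 0 ≤ a i j)
    (v1 v2 : ℕ → ℝ)
    (hv1 : ∀ (j : Fin m) (k : ℕ) (e : Fin k ↪ Fin n), ∑ l, a (e l) j ≤ v1 k)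
    (hv2 : ∀ (i : Fin n) (k : ℕ) (e : Fin k ↪ Fin m), ∑ l, a i (e l) ≤ v2 k) :
    ∑ i : Fin n, ∑ j : Fin m, a i j / ((((i:ℕ):ℝ)+1)*(((j:ℕ):ℝ)+1))
      ≤ 4 * ((∑ k ∈ range n, Real.sqrt (v1 (k+1) / ((k:ℝ)+1)) * (1/((k:ℝ)+1)))
           * (∑ k ∈ range m, Real.sqrt (v2 (k+1) / ((k:ℝ)+1)) * (1/((k:ℝ)+1)))) := by
  classical
  rcases Nat.eq_zero_or_pos n with hn | hn
  · subst hn; simp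
  rcases Nat.eq_zero_or_pos m with hm | hm
  · subst hm; simp
  choose τ1 hanti1 hrank1 using fun j : Fin m => exists_sort_perm n (fun i => a i j) v1 (hv1 j)
  choose τ2 hanti2 hrank2 using fun i : Fin n => exists_sort_perm m (fun j => a i j) v2 (hv2 i)
  set ρ1 : Fin n → Fin m → ℕ := fun i j => (((τ1 j)⁻¹ i : Fin n) : ℕ) with hρ1
  set ρ2 : Fin n → Fin m → ℕ := fun i j => (((τ2 i)⁻¹ j : Fin m) : ℕ) with hρ2
  have hρ1lt : ∀ i j, ρ1 i j < n := fun i j => ((τ1 j)⁻¹ i).2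
  have hρ2lt : ∀ i j, ρ2 i j < m := fun i j => ((τ2 i)⁻¹ j).2
  have key1 : ∀ (i : Fin n) (j : Fin m) (l : ℕ), l ≤ ρ1 i j →
      a i j ≤ v1 (l+1) / ((l:ℝ)+1) := by
    intro i j l hl
    have hln : l < n := lt_of_le_of_lt hl (hρ1lt i j)
    have h1 : a i j = (fun i => a i j) ((τ1 j) ((τ1 j)⁻¹ i)) := by simp
    calc a i j = ((fun i => a i j) ∘ (τ1 j)) ((τ1 j)⁻¹ i) := h1
      _ ≤ ((fun i => a i j) ∘ (τ1 j)) ⟨l, hln⟩ := by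
          apply hanti1 j
          rw [Fin.le_def]
          exact hl
      _ ≤ v1 (l+1) / ((l:ℝ)+1) := by
          have := hrank1 j ⟨l, hln⟩
          simpa using this
  have key2 : ∀ (i : Fin n) (j : Fin m) (l : ℕ), l ≤ ρ2 i j →
      a i j ≤ v2 (l+1) / ((l:ℝ)+1) := by
    intro i j l hl
    have hlm : l < m := lt_of_le_of_lt hl (hρ2lt i j)
    have h1 : a i j = (fun j => a i j) ((τ2 i) ((τ2 i)⁻¹ j)) := by simp
    calc a i j = ((fun j => a i j) ∘ (τ2 i)) ((τ2 i)⁻¹ j) := h1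
      _ ≤ ((fun j => a i j) ∘ (τ2 i)) ⟨l, hlm⟩ := by
          apply hanti2 i
          rw [Fin.le_def]
          exact hl
      _ ≤ v2 (l+1) / ((l:ℝ)+1) := by
          have := hrank2 i ⟨l, hlm⟩
          simpa using this
  -- nonnegativity of v1, v2 in range
  have hv1nn : ∀ k : ℕ, k ≤ n → 0 ≤ v1 k := by
    intro k hk
    have := hv1 ⟨0, hm⟩ k (Fin.castLEEmb hk)
    refine le_trans (Finset.sum_nonneg fun l _ => ha _ _) this
  have hv2nn : ∀ k : ℕ, k ≤ m → 0 ≤ v2 k := by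
    intro k hk
    have := hv2 ⟨0, hn⟩ k (Fin.castLEEmb hk)
    refine le_trans (Finset.sum_nonneg fun l _ => ha _ _) this
  -- monotone envelopes
  set w1 : ℕ → ℝ := fun k => (range (k+1)).inf' nonempty_range_add_one (fun l => v1 (l+1)/((l:ℝ)+1)) with hw1
  set w2 : ℕ → ℝ := fun k => (range (k+1)).inf' nonempty_range_add_one (fun l => v2 (l+1)/((l:ℝ)+1)) with hw2
  have hw1anti : Antitone w1 := by
    intro k k' hk
    exact Finset.inf'_mono _ (range_subset_range.mpr (by omega)) nonempty_range_add_one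
  have hw2anti : Antitone w2 := by
    intro k k' hk
    exact Finset.inf'_mono _ (range_subset_range.mpr (by omega)) nonempty_range_add_one
  have hw1le : ∀ k, w1 k ≤ v1 (k+1)/((k:ℝ)+1) :=
    fun k => Finset.inf'_le _ (self_mem_range_succ k)
  have hw2le : ∀ k, w2 k ≤ v2 (k+1)/((k:ℝ)+1) :=
    fun k => Finset.inf'_le _ (self_mem_range_succ k)
  have hw1nn : ∀ k, k < n → 0 ≤ w1 k := by
    intro k hk
    apply Finset.le_inf' nonempty_range_add_one
    intro l hl
    have : l + 1 ≤ n := by have := mem_range.mp hl; omega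
    have := hv1nn (l+1) this
    positivity
  have hw2nn : ∀ k, k < m → 0 ≤ w2 k := by
    intro k hk
    apply Finset.le_inf' nonempty_range_add_one
    intro l hl
    have : l + 1 ≤ m := by have := mem_range.mp hl; omega
    have := hv2nn (l+1) this
    positivity
  have haw1 : ∀ i j, a i j ≤ w1 (ρ1 i j) := by
    intro i j
    apply Finset.le_inf' nonempty_range_add_one
    intro l hl
    exact key1 i j l (by have := mem_range.mp hl; omega)
  have haw2 : ∀ i j, a i j ≤ w2 (ρ2 i j) := by
    intro i j
    apply Finset.le_inf' nonempty_range_add_one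
    intro l hl
    exact key2 i j l (by have := mem_range.mp hl; omega)
  -- square-root envelopes with cutoff
  set g : ℕ → ℝ := fun k => if k < n then Real.sqrt (w1 k) else 0 with hg
  set h : ℕ → ℝ := fun k => if k < m then Real.sqrt (w2 k) else 0 with hh
  have hgnn : ∀ k, 0 ≤ g k := by
    intro k; rw [hg]; dsimp only; split <;> [exact Real.sqrt_nonneg _; exact le_refl 0]
  have hhnn : ∀ k, 0 ≤ h k := by
    intro k; rw [hh]; dsimp only; split <;> [exact Real.sqrt_nonneg _; exact le_refl 0]
  have hganti : Antitone g := by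
    intro k k' hk
    rw [hg]; dsimp only
    by_cases h1 : k' < n
    · rw [if_pos h1, if_pos (lt_of_le_of_lt hk h1)]
      exact Real.sqrt_le_sqrt (hw1anti hk)
    · rw [if_neg h1]
      split <;> [exact Real.sqrt_nonneg _; exact le_refl 0]
  have hhanti : Antitone h := by
    intro k k' hk
    rw [hh]; dsimp only
    by_cases h1 : k' < m
    · rw [if_pos h1, if_pos (lt_of_le_of_lt hk h1)]
      exact Real.sqrt_le_sqrt (hw2anti hk)
    · rw [if_neg h1]
      split <;> [exact Real.sqrt_nonneg _; exact le_refl 0]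
  have hgn0 : g n = 0 := by rw [hg]; simp
  have hhm0 : h m = 0 := by rw [hh]; simp
  have hagh : ∀ i j, a i j ≤ g (ρ1 i j) * h (ρ2 i j) := by
    intro i j
    have h1 : a i j * a i j ≤ w1 (ρ1 i j) * w2 (ρ2 i j) :=
      mul_le_mul (haw1 i j) (haw2 i j) (ha i j) (hw1nn _ (hρ1lt i j))
    calc a i j = Real.sqrt (a i j * a i j) := (Real.sqrt_mul_self (ha i j)).symm
      _ ≤ Real.sqrt (w1 (ρ1 i j) * w2 (ρ2 i j)) := Real.sqrt_le_sqrt h1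
      _ = Real.sqrt (w1 (ρ1 i j)) * Real.sqrt (w2 (ρ2 i j)) :=
          Real.sqrt_mul (hw1nn _ (hρ1lt i j)) _
      _ = g (ρ1 i j) * h (ρ2 i j) := by
          rw [hg, hh]; dsimp only
          rw [if_pos (hρ1lt i j), if_pos (hρ2lt i j)]
  -- main computation
  set D : Fin n → Fin m → ℝ := fun i j => ((((i:ℕ)):ℝ)+1)*((((j:ℕ)):ℝ)+1) with hD
  have hDpos : ∀ i j, 0 < D i j := by intro i j; rw [hD]; positivity
  set T : ℕ → ℕ → ℝ := fun k l => ∑ i : Fin n, ∑ j : Fin m,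
      (if ρ1 i j ≤ k ∧ ρ2 i j ≤ l then 1 / D i j else 0) with hT
  have stepA : ∑ i : Fin n, ∑ j : Fin m, a i j / D i j
      ≤ ∑ i : Fin n, ∑ j : Fin m, g (ρ1 i j) * h (ρ2 i j) * (1 / D i j) := by
    apply Finset.sum_le_sum; intro i _
    apply Finset.sum_le_sum; intro j _
    rw [div_eq_mul_one_div]
    exact mul_le_mul_of_nonneg_right (hagh i j) (by have := hDpos i j; positivity)
  have stepB : ∀ (i : Fin n) (j : Fin m), g (ρ1 i j) * h (ρ2 i j) * (1 / D i j)
      = ∑ k ∈ range n, ∑ l ∈ range m,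
          (if ρ1 i j ≤ k ∧ ρ2 i j ≤ l then (g k - g (k+1)) * (h l - h (l+1)) * (1 / D i j) else 0) := by
    intro i j
    have hgsum : g (ρ1 i j) = ∑ k ∈ range n, (if ρ1 i j ≤ k then g k - g (k+1) else 0) :=
      (tel_sum g hgn0 (hρ1lt i j)).symm
    have hhsum : h (ρ2 i j) = ∑ l ∈ range m, (if ρ2 i j ≤ l then h l - h (l+1) else 0) := by
      exact (tel_sum h hhm0 (hρ2lt i j)).symm
    rw [hgsum, hhsum, Finset.sum_mul_sum, Finset.sum_mul]
    apply Finset.sum_congr rfl; intro k _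
    rw [Finset.sum_mul]
    apply Finset.sum_congr rfl; intro l _
    by_cases h1 : ρ1 i j ≤ k <;> by_cases h2 : ρ2 i j ≤ l <;> simp [h1, h2]
  have stepD : ∀ k l, (∑ i : Fin n, ∑ j : Fin m,
      (if ρ1 i j ≤ k ∧ ρ2 i j ≤ l then (g k - g (k+1)) * (h l - h (l+1)) * (1 / D i j) else 0))
      = (g k - g (k+1)) * ((h l - h (l+1)) * T k l) := by
    intro k l
    rw [hT]; dsimp only
    rw [Finset.mul_sum, Finset.mul_sum]
    apply Finset.sum_congr rfl; intro i _
    rw [Finset.mul_sum, Finset.mul_sum]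
    apply Finset.sum_congr rfl; intro j _
    by_cases h1 : ρ1 i j ≤ k ∧ ρ2 i j ≤ l
    · rw [if_pos h1, if_pos h1]; ring
    · rw [if_neg h1, if_neg h1]; ring
  have hTnn : ∀ k l, 0 ≤ T k l := by
    intro k l
    apply Finset.sum_nonneg; intro i _
    apply Finset.sum_nonneg; intro j _
    have := hDpos i j
    split <;> positivity
  have stepE : ∀ k l : ℕ, T k l ≤ 4 * (Hsum (k+1) * Hsum (l+1)) := by
    intro k l
    set Q : Finset (Fin n × Fin m) :=
      Finset.univ.filter (fun p => ρ1 p.1 p.2 ≤ k ∧ ρ2 p.1 p.2 ≤ l) with hQ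
    set emb : Fin n × Fin m → ℕ × ℕ := fun p => ((p.1 : ℕ), (p.2 : ℕ)) with hemb
    have hembinj : Function.Injective emb := by
      intro p q hpq
      rw [hemb] at hpq
      simp only [Prod.mk.injEq] at hpq
      exact Prod.ext (Fin.ext hpq.1) (Fin.ext hpq.2)
    have hTP : T k l = ∑ p ∈ Q.image emb, (1:ℝ)/(((p.1:ℝ)+1)*((p.2:ℝ)+1)) := by
      calc T k l = ∑ p : Fin n × Fin m,
            (if ρ1 p.1 p.2 ≤ k ∧ ρ2 p.1 p.2 ≤ l then 1 / D p.1 p.2 else 0) := by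
            rw [hT]
            exact (Fintype.sum_prod_type (fun p : Fin n × Fin m =>
              if ρ1 p.1 p.2 ≤ k ∧ ρ2 p.1 p.2 ≤ l then 1 / D p.1 p.2 else 0)).symm
        _ = ∑ p ∈ Q, 1 / D p.1 p.2 := by
            rw [hQ]
            exact (Finset.sum_filter _ _).symm
        _ = ∑ p ∈ Q.image emb, (1:ℝ)/(((p.1:ℝ)+1)*((p.2:ℝ)+1)) := by
            rw [Finset.sum_image (fun x _ y _ hxy => hembinj hxy)]
    have hcolP : ∀ j0 : ℕ, ((Q.image emb).filter (fun p => p.2 = j0)).card ≤ k+1 := by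
      intro j0
      rw [Finset.filter_image, Finset.card_image_of_injective _ hembinj,
        ← Finset.card_range (k+1)]
      apply Finset.card_le_card_of_injOn (fun p : Fin n × Fin m => ρ1 p.1 p.2)
      · intro p hp
        rw [Finset.mem_coe, Finset.mem_filter, hQ, Finset.mem_filter] at hp
        rw [Finset.mem_coe, Finset.mem_range]
        dsimp only
        omega
      · intro p hp q hq hpq
        rw [Finset.mem_coe, Finset.mem_filter, hQ, Finset.mem_filter] at hp hq
        have h2 : p.2 = q.2 := by
          apply Fin.ext
          have hp2 : (emb p).2 = j0 := hp.2
          have hq2 : (emb q).2 = j0 := hq.2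
          rw [hemb] at hp2 hq2
          simpa using hp2.trans hq2.symm
        have h1 : p.1 = q.1 := by
          have heq : ((τ1 p.2)⁻¹ p.1 : Fin n) = ((τ1 q.2)⁻¹ q.1 : Fin n) := by
            apply Fin.ext
            exact hpq
          rw [← h2] at heq
          have := congrArg (τ1 p.2) heq
          simpa using this
        exact Prod.ext h1 h2
    have hrowP : ∀ i0 : ℕ, ((Q.image emb).filter (fun p => p.1 = i0)).card ≤ l+1 := by
      intro i0
      rw [Finset.filter_image, Finset.card_image_of_injective _ hembinj,
        ← Finset.card_range (l+1)]
      apply Finset.card_le_card_of_injOn (fun p : Fin n × Fin m => ρ2 p.1 p.2)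
      · intro p hp
        rw [Finset.mem_coe, Finset.mem_filter, hQ, Finset.mem_filter] at hp
        rw [Finset.mem_coe, Finset.mem_range]
        dsimp only
        omega
      · intro p hp q hq hpq
        rw [Finset.mem_coe, Finset.mem_filter, hQ, Finset.mem_filter] at hp hq
        have h1 : p.1 = q.1 := by
          apply Fin.ext
          have hp1 : (emb p).1 = i0 := hp.2
          have hq1 : (emb q).1 = i0 := hq.2
          rw [hemb] at hp1 hq1
          simpa using hp1.trans hq1.symm
        have h2 : p.2 = q.2 := by
          have heq : ((τ2 p.1)⁻¹ p.2 : Fin m) = ((τ2 q.1)⁻¹ q.2 : Fin m) := by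
            apply Fin.ext
            exact hpq
          rw [← h1] at heq
          have := congrArg (τ2 p.1) heq
          simpa using this
        exact Prod.ext h1 h2
    rw [hTP, ← mul_assoc]
    have := grid_bound (Q.image emb) (k+1) (l+1) (by omega) (by omega) hcolP hrowP
    calc ∑ p ∈ Q.image emb, (1:ℝ)/(((p.1:ℝ)+1)*((p.2:ℝ)+1))
        ≤ 4 * (Hsum (k+1) * Hsum (l+1)) := this
      _ = 4 * Hsum (k+1) * Hsum (l+1) := by ring
  have hδg : ∀ k, 0 ≤ g k - g (k+1) := fun k => sub_nonneg.mpr (hganti (by omega))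
  have hδh : ∀ l, 0 ≤ h l - h (l+1) := fun l => sub_nonneg.mpr (hhanti (by omega))
  calc ∑ i : Fin n, ∑ j : Fin m, a i j / D i j
      ≤ ∑ i : Fin n, ∑ j : Fin m, g (ρ1 i j) * h (ρ2 i j) * (1 / D i j) := stepA
    _ = ∑ i : Fin n, ∑ j : Fin m, ∑ k ∈ range n, ∑ l ∈ range m,
          (if ρ1 i j ≤ k ∧ ρ2 i j ≤ l then (g k - g (k+1)) * (h l - h (l+1)) * (1 / D i j) else 0) :=
        Finset.sum_congr rfl (fun i _ => Finset.sum_congr rfl (fun j _ => stepB i j))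
    _ = ∑ k ∈ range n, ∑ l ∈ range m, ∑ i : Fin n, ∑ j : Fin m,
          (if ρ1 i j ≤ k ∧ ρ2 i j ≤ l then (g k - g (k+1)) * (h l - h (l+1)) * (1 / D i j) else 0) :=
        sum_swap4 _ _ _
    _ = ∑ k ∈ range n, ∑ l ∈ range m, (g k - g (k+1)) * ((h l - h (l+1)) * T k l) :=
        Finset.sum_congr rfl (fun k _ => Finset.sum_congr rfl (fun l _ => stepD k l))
    _ ≤ ∑ k ∈ range n, ∑ l ∈ range m,
          (g k - g (k+1)) * ((h l - h (l+1)) * (4 * (Hsum (k+1) * Hsum (l+1)))) := by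
        apply Finset.sum_le_sum; intro k _
        apply Finset.sum_le_sum; intro l _
        exact mul_le_mul_of_nonneg_left
          (mul_le_mul_of_nonneg_left (stepE k l) (hδh l)) (hδg k)
    _ = 4 * ((∑ k ∈ range n, (g k - g (k+1)) * Hsum (k+1))
           * (∑ l ∈ range m, (h l - h (l+1)) * Hsum (l+1))) := by
        rw [Finset.sum_mul_sum, Finset.mul_sum]
        apply Finset.sum_congr rfl; intro k _
        rw [Finset.mul_sum]
        apply Finset.sum_congr rfl; intro l _
        ring
    _ = 4 * ((∑ t ∈ range n, g t * (1/((t:ℝ)+1)))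
           * (∑ t ∈ range m, h t * (1/((t:ℝ)+1)))) := by
        rw [abel_sum g hgn0, abel_sum h hhm0]
    _ ≤ 4 * ((∑ k ∈ range n, Real.sqrt (v1 (k+1) / ((k:ℝ)+1)) * (1/((k:ℝ)+1)))
           * (∑ k ∈ range m, Real.sqrt (v2 (k+1) / ((k:ℝ)+1)) * (1/((k:ℝ)+1)))) := by
        have e1 : ∑ t ∈ range n, g t * (1/((t:ℝ)+1))
            ≤ ∑ k ∈ range n, Real.sqrt (v1 (k+1) / ((k:ℝ)+1)) * (1/((k:ℝ)+1)) := by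
          apply Finset.sum_le_sum; intro t ht
          apply mul_le_mul_of_nonneg_right _ (by positivity)
          rw [hg]; dsimp only
          rw [if_pos (mem_range.mp ht)]
          exact Real.sqrt_le_sqrt (hw1le t)
        have e2 : ∑ t ∈ range m, h t * (1/((t:ℝ)+1))
            ≤ ∑ k ∈ range m, Real.sqrt (v2 (k+1) / ((k:ℝ)+1)) * (1/((k:ℝ)+1)) := by
          apply Finset.sum_le_sum; intro t ht
          apply mul_le_mul_of_nonneg_right _ (by positivity)
          rw [hh]; dsimp only
          rw [if_pos (mem_range.mp ht)]
          exact Real.sqrt_le_sqrt (hw2le t)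
        have nn1 : 0 ≤ ∑ t ∈ range m, h t * (1/((t:ℝ)+1)) := by
          apply Finset.sum_nonneg; intro t _
          exact mul_nonneg (hhnn t) (by positivity)
        have nn2 : 0 ≤ ∑ k ∈ range n, Real.sqrt (v1 (k+1) / ((k:ℝ)+1)) * (1/((k:ℝ)+1)) := by
          apply Finset.sum_nonneg; intro t _; positivity
        apply mul_le_mul_of_nonneg_left _ (by norm_num : (0:ℝ) ≤ 4)
        exact mul_le_mul e1 e2 nn1 nn2

end DWcore



open scoped ENNReal BigOperators
open Filter Set

section DWplumb

lemma nonoverlap_comp {n k : ℕ} {I : Fin n → ℝ × ℝ} (h : NonoverlapIcc n I) (e : Fin k ↪ Fin n) :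
    NonoverlapIcc k (I ∘ e) :=
  ⟨fun i => h.1 (e i), fun i j hij => h.2 (e i) (e j) (fun hh => hij (e.injective hh))⟩

lemma ofReal_sum_le_modV1 (f : ℝ → ℝ → ℝ) {y : ℝ} (hy : y ∈ Icc (0:ℝ) (2*Real.pi)) {k : ℕ}
    {I : Fin k → ℝ × ℝ} (hI : NonoverlapIcc k I) :
    ENNReal.ofReal (∑ i, |f (I i).2 y - f (I i).1 y|) ≤ modV1 f k := by
  unfold modV1
  refine le_iSup_of_le y (le_iSup_of_le hy (le_iSup_of_le I (le_iSup_of_le hI le_rfl)))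

lemma sum_le_modV1 (f : ℝ → ℝ → ℝ) {y : ℝ} (hy : y ∈ Icc (0:ℝ) (2*Real.pi)) {k : ℕ}
    {I : Fin k → ℝ × ℝ} (hI : NonoverlapIcc k I) (hfin : modV1 f k ≠ ⊤) :
    ∑ i, |f (I i).2 y - f (I i).1 y| ≤ (modV1 f k).toReal := by
  have h0 : 0 ≤ ∑ i, |f (I i).2 y - f (I i).1 y| := Finset.sum_nonneg fun i _ => abs_nonneg _
  have h2 := ENNReal.toReal_mono hfin (ofReal_sum_le_modV1 f hy hI)
  rwa [ENNReal.toReal_ofReal h0] at h2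

lemma modV1_zero_ne_top (f : ℝ → ℝ → ℝ) : modV1 f 0 ≠ ⊤ := by
  have : modV1 f 0 ≤ ENNReal.ofReal 0 := by
    unfold modV1
    refine iSup_le fun y => iSup_le fun hy => iSup_le fun I => iSup_le fun hI => ?_
    simp
  exact ne_top_of_le_ne_top ENNReal.ofReal_ne_top this

lemma modV1_ne_top_of (f : ℝ → ℝ → ℝ)
    (h1 : ∑' n : ℕ, (modV1 f (n + 1)) ^ ((1 : ℝ)/2) / ((n : ℝ≥0∞) + 1) ^ ((3 : ℝ)/2) ≠ ⊤) :
    ∀ k : ℕ, modV1 f k ≠ ⊤ := by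
  intro k
  cases k with
  | zero => exact modV1_zero_ne_top f
  | succ k =>
    intro htop
    apply h1
    have hterm : (modV1 f (k + 1)) ^ ((1 : ℝ)/2) / ((k : ℝ≥0∞) + 1) ^ ((3 : ℝ)/2) = ⊤ := by
      rw [htop, ENNReal.top_rpow_of_pos (by norm_num)]
      exact ENNReal.top_div_of_ne_top (ENNReal.rpow_ne_top_of_nonneg (by norm_num) (by simp))
    have hle := ENNReal.le_tsum
      (f := fun n : ℕ => (modV1 f (n + 1)) ^ ((1 : ℝ)/2) / ((n : ℝ≥0∞) + 1) ^ ((3 : ℝ)/2)) k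
    rw [hterm] at hle
    exact eq_top_iff.mpr hle

lemma real_term_eq {v c : ℝ} (hv : 0 ≤ v) (hc : 0 < c) :
    v ^ ((1:ℝ)/2) / c ^ ((3:ℝ)/2) = Real.sqrt (v / c) * (1 / c) := by
  have hsc : (0:ℝ) < Real.sqrt c := Real.sqrt_pos.mpr hc
  rw [Real.sqrt_div hv, ← Real.sqrt_eq_rpow,
    show (3:ℝ)/2 = 1/2 + 1 by norm_num, Real.rpow_add hc, Real.rpow_one, ← Real.sqrt_eq_rpow]
  field_simp

lemma enn_term_toReal (X : ℝ≥0∞) (hX : X ≠ ⊤) (k : ℕ) :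
    (X ^ ((1 : ℝ)/2) / ((k : ℝ≥0∞) + 1) ^ ((3 : ℝ)/2)).toReal
      = Real.sqrt (X.toReal / ((k:ℝ)+1)) * (1/((k:ℝ)+1)) := by
  rw [ENNReal.toReal_div, ← ENNReal.toReal_rpow, ← ENNReal.toReal_rpow]
  have hc : (((k : ℝ≥0∞) + 1)).toReal = (k:ℝ)+1 := by
    rw [ENNReal.toReal_add (by simp) (by simp)]
    simp
  rw [hc]
  exact real_term_eq ENNReal.toReal_nonneg (by positivity)

lemma partial_sqrt_le (f : ℝ → ℝ → ℝ)
    (h1 : ∑' n : ℕ, (modV1 f (n + 1)) ^ ((1 : ℝ)/2) / ((n : ℝ≥0∞) + 1) ^ ((3 : ℝ)/2) ≠ ⊤)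
    (N : ℕ) :
    ∑ k ∈ Finset.range N, Real.sqrt ((modV1 f (k+1)).toReal / ((k:ℝ)+1)) * (1/((k:ℝ)+1))
      ≤ (∑' n : ℕ, (modV1 f (n + 1)) ^ ((1 : ℝ)/2) / ((n : ℝ≥0∞) + 1) ^ ((3 : ℝ)/2)).toReal := by
  have hfin := modV1_ne_top_of f h1
  set term : ℕ → ℝ≥0∞ :=
    fun n => (modV1 f (n + 1)) ^ ((1 : ℝ)/2) / ((n : ℝ≥0∞) + 1) ^ ((3 : ℝ)/2) with hterm
  have hterm_ne : ∀ k : ℕ, term k ≠ ⊤ := by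
    intro k
    exact ne_top_of_le_ne_top h1 (ENNReal.le_tsum k)
  calc ∑ k ∈ Finset.range N, Real.sqrt ((modV1 f (k+1)).toReal / ((k:ℝ)+1)) * (1/((k:ℝ)+1))
      = ∑ k ∈ Finset.range N, (term k).toReal := by
        apply Finset.sum_congr rfl
        intro k _
        rw [hterm]
        exact (enn_term_toReal (modV1 f (k+1)) (hfin (k+1)) k).symm
    _ = (∑ k ∈ Finset.range N, term k).toReal :=
        (ENNReal.toReal_sum (fun k _ => hterm_ne k)).symm
    _ ≤ _ := ENNReal.toReal_mono h1 (ENNReal.sum_le_tsum _)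

lemma sqrt_ratio_le (f : ℝ → ℝ → ℝ) (hfin : ∀ k : ℕ, modV1 f k ≠ ⊤) (k : ℕ) :
    (modV1 f (k+1)).toReal / ((k:ℝ)+1) ≤ (modV1 f 1).toReal := by
  have hBnn : (0:ℝ) ≤ (modV1 f 1).toReal := ENNReal.toReal_nonneg
  have hb : modV1 f (k+1) ≤ ENNReal.ofReal (((k:ℝ)+1) * (modV1 f 1).toReal) := by
    unfold modV1
    refine iSup_le fun y => iSup_le fun hy => iSup_le fun I => iSup_le fun hI => ?_
    apply ENNReal.ofReal_le_ofReal
    calc ∑ i, |f (I i).2 y - f (I i).1 y| ≤ ∑ _i : Fin (k+1), (modV1 f 1).toReal := by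
          apply Finset.sum_le_sum
          intro i _
          have hI1 : NonoverlapIcc 1 (fun _ : Fin 1 => I i) :=
            ⟨fun _ => hI.1 i, fun a b hab => absurd (Subsingleton.elim a b) hab⟩
          have h3 := sum_le_modV1 f hy hI1 (hfin 1)
          simpa using h3
      _ = ((k:ℝ)+1) * (modV1 f 1).toReal := by
          rw [Finset.sum_const, Finset.card_univ, Fintype.card_fin, nsmul_eq_mul]
          push_cast; ring
  have h2 := ENNReal.toReal_mono ENNReal.ofReal_ne_top hb
  rw [ENNReal.toReal_ofReal (mul_nonneg (by positivity) hBnn)] at h2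
  rw [div_le_iff₀ (by positivity)]
  linarith

lemma lamV1_le (f : ℝ → ℝ → ℝ)
    (h1 : ∑' n : ℕ, (modV1 f (n + 1)) ^ ((1 : ℝ)/2) / ((n : ℝ≥0∞) + 1) ^ ((3 : ℝ)/2) ≠ ⊤) :
    LamV1 (fun n => (n : ℝ)) f ≤ ENNReal.ofReal (Real.sqrt ((modV1 f 1).toReal) *
      (∑' n : ℕ, (modV1 f (n + 1)) ^ ((1 : ℝ)/2) / ((n : ℝ≥0∞) + 1) ^ ((3 : ℝ)/2)).toReal) := by
  have hfin := modV1_ne_top_of f h1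
  unfold LamV1
  refine iSup_le fun y => iSup_le fun hy => iSup_le fun n => iSup_le fun I => iSup_le fun hI => ?_
  apply ENNReal.ofReal_le_ofReal
  set a : Fin n → ℝ := fun i => |f (I i).2 y - f (I i).1 y| with ha
  have hv : ∀ (k : ℕ) (e : Fin k ↪ Fin n), ∑ l, a (e l) ≤ (modV1 f k).toReal := by
    intro k e
    exact sum_le_modV1 f hy (nonoverlap_comp hI e) (hfin k)
  calc ∑ i, a i / ((((i:ℕ)+1 : ℕ)) : ℝ)
      = ∑ i, a i / (((i:ℕ):ℝ)+1) := by
        apply Finset.sum_congr rfl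
        intro i _
        push_cast
        ring
    _ ≤ ∑ k ∈ Finset.range n, (modV1 f (k+1)).toReal / (((k:ℝ)+1)*((k:ℝ)+1)) :=
        sort_bound n a _ hv
    _ ≤ ∑ k ∈ Finset.range n, Real.sqrt ((modV1 f 1).toReal) *
          (Real.sqrt ((modV1 f (k+1)).toReal/((k:ℝ)+1)) * (1/((k:ℝ)+1))) := by
        apply Finset.sum_le_sum
        intro k _
        set x : ℝ := (modV1 f (k+1)).toReal/((k:ℝ)+1) with hx
        have hxnn : 0 ≤ x := div_nonneg ENNReal.toReal_nonneg (by positivity)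
        have hxB : Real.sqrt x ≤ Real.sqrt ((modV1 f 1).toReal) :=
          Real.sqrt_le_sqrt (sqrt_ratio_le f hfin k)
        have hre : (modV1 f (k+1)).toReal / (((k:ℝ)+1)*((k:ℝ)+1)) = x * (1/((k:ℝ)+1)) := by
          rw [hx]; field_simp
        rw [hre]
        have hxx : x ≤ Real.sqrt ((modV1 f 1).toReal) * Real.sqrt x := by
          calc x = Real.sqrt x * Real.sqrt x := (Real.mul_self_sqrt hxnn).symm
            _ ≤ Real.sqrt ((modV1 f 1).toReal) * Real.sqrt x :=
                mul_le_mul_of_nonneg_right hxB (Real.sqrt_nonneg x)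
        calc x * (1/((k:ℝ)+1))
            ≤ (Real.sqrt ((modV1 f 1).toReal) * Real.sqrt x) * (1/((k:ℝ)+1)) :=
              mul_le_mul_of_nonneg_right hxx (by positivity)
          _ = Real.sqrt ((modV1 f 1).toReal) * (Real.sqrt x * (1/((k:ℝ)+1))) := by ring
    _ = Real.sqrt ((modV1 f 1).toReal) * ∑ k ∈ Finset.range n,
          Real.sqrt ((modV1 f (k+1)).toReal/((k:ℝ)+1)) * (1/((k:ℝ)+1)) := by
        rw [Finset.mul_sum]
    _ ≤ Real.sqrt ((modV1 f 1).toReal) *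
        (∑' n : ℕ, (modV1 f (n + 1)) ^ ((1 : ℝ)/2) / ((n : ℝ≥0∞) + 1) ^ ((3 : ℝ)/2)).toReal :=
        mul_le_mul_of_nonneg_left (partial_sqrt_le f h1 n) (Real.sqrt_nonneg _)

lemma lamV12_le (f : ℝ → ℝ → ℝ)
    (h1 : ∑' n : ℕ, (modV1 f (n + 1)) ^ ((1 : ℝ)/2) / ((n : ℝ≥0∞) + 1) ^ ((3 : ℝ)/2) ≠ ⊤)
    (h2' : ∑' n : ℕ, (modV1 (fun x y => f y x) (n + 1)) ^ ((1 : ℝ)/2) / ((n : ℝ≥0∞) + 1) ^ ((3 : ℝ)/2) ≠ ⊤) :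
    LamV12 (fun n => (n : ℝ)) f ≤ ENNReal.ofReal (4 * ((Real.sqrt 2 *
      (∑' n : ℕ, (modV1 f (n + 1)) ^ ((1 : ℝ)/2) / ((n : ℝ≥0∞) + 1) ^ ((3 : ℝ)/2)).toReal) *
      (Real.sqrt 2 *
      (∑' n : ℕ, (modV1 (fun x y => f y x) (n + 1)) ^ ((1 : ℝ)/2) / ((n : ℝ≥0∞) + 1) ^ ((3 : ℝ)/2)).toReal))) := by
  set fT : ℝ → ℝ → ℝ := fun x y => f y x with hfT
  set S1 : ℝ := (∑' n : ℕ, (modV1 f (n + 1)) ^ ((1 : ℝ)/2) / ((n : ℝ≥0∞) + 1) ^ ((3 : ℝ)/2)).toReal with hS1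
  set S2 : ℝ := (∑' n : ℕ, (modV1 fT (n + 1)) ^ ((1 : ℝ)/2) / ((n : ℝ≥0∞) + 1) ^ ((3 : ℝ)/2)).toReal with hS2
  have hfin1 := modV1_ne_top_of f h1
  have hfin2 := modV1_ne_top_of fT h2'
  unfold LamV12
  refine iSup_le fun n => iSup_le fun m => iSup_le fun I => iSup_le fun J =>
    iSup_le fun hI => iSup_le fun hJ => ?_
  apply ENNReal.ofReal_le_ofReal
  set a : Fin n → Fin m → ℝ := fun i j =>
    |f (I i).1 (J j).1 - f (I i).1 (J j).2 - f (I i).2 (J j).1 + f (I i).2 (J j).2| with ha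
  have hann : ∀ i j, 0 ≤ a i j := fun i j => abs_nonneg _
  have hJy : ∀ j : Fin m, (J j).1 ∈ Icc (0:ℝ) (2*Real.pi) ∧ (J j).2 ∈ Icc (0:ℝ) (2*Real.pi) := by
    intro j
    obtain ⟨h0, hlt, h2pi⟩ := hJ.1 j
    exact ⟨⟨h0, le_trans hlt.le h2pi⟩, ⟨le_trans h0 hlt.le, h2pi⟩⟩
  have hIx : ∀ i : Fin n, (I i).1 ∈ Icc (0:ℝ) (2*Real.pi) ∧ (I i).2 ∈ Icc (0:ℝ) (2*Real.pi) := by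
    intro i
    obtain ⟨h0, hlt, h2pi⟩ := hI.1 i
    exact ⟨⟨h0, le_trans hlt.le h2pi⟩, ⟨le_trans h0 hlt.le, h2pi⟩⟩
  have hv1 : ∀ (j : Fin m) (k : ℕ) (e : Fin k ↪ Fin n),
      ∑ l, a (e l) j ≤ 2 * (modV1 f k).toReal := by
    intro j k e
    have htri : ∀ l : Fin k, a (e l) j ≤
        |f (I (e l)).2 (J j).1 - f (I (e l)).1 (J j).1|
        + |f (I (e l)).2 (J j).2 - f (I (e l)).1 (J j).2| := by
      intro l
      rw [ha]
      dsimp only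
      have hiden : f (I (e l)).1 (J j).1 - f (I (e l)).1 (J j).2 - f (I (e l)).2 (J j).1
            + f (I (e l)).2 (J j).2
          = (f (I (e l)).2 (J j).2 - f (I (e l)).1 (J j).2)
            - (f (I (e l)).2 (J j).1 - f (I (e l)).1 (J j).1) := by ring
      rw [hiden]
      have := abs_sub (f (I (e l)).2 (J j).2 - f (I (e l)).1 (J j).2)
        (f (I (e l)).2 (J j).1 - f (I (e l)).1 (J j).1)
      linarith
    calc ∑ l, a (e l) j
        ≤ ∑ l : Fin k, (|f (I (e l)).2 (J j).1 - f (I (e l)).1 (J j).1|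
          + |f (I (e l)).2 (J j).2 - f (I (e l)).1 (J j).2|) :=
          Finset.sum_le_sum (fun l _ => htri l)
      _ = (∑ l : Fin k, |f (I (e l)).2 (J j).1 - f (I (e l)).1 (J j).1|)
          + ∑ l : Fin k, |f (I (e l)).2 (J j).2 - f (I (e l)).1 (J j).2| :=
          Finset.sum_add_distrib
      _ ≤ (modV1 f k).toReal + (modV1 f k).toReal := by
          apply add_le_add
          · have := sum_le_modV1 f (hJy j).1 (nonoverlap_comp hI e) (hfin1 k)
            simpa [Function.comp] using this
          · have := sum_le_modV1 f (hJy j).2 (nonoverlap_comp hI e) (hfin1 k)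
            simpa [Function.comp] using this
      _ = 2 * (modV1 f k).toReal := by ring
  have hv2 : ∀ (i : Fin n) (k : ℕ) (e : Fin k ↪ Fin m),
      ∑ l, a i (e l) ≤ 2 * (modV1 fT k).toReal := by
    intro i k e
    have htri : ∀ l : Fin k, a i (e l) ≤
        |fT (J (e l)).2 (I i).1 - fT (J (e l)).1 (I i).1|
        + |fT (J (e l)).2 (I i).2 - fT (J (e l)).1 (I i).2| := by
      intro l
      rw [ha, hfT]
      dsimp only
      have hiden : f (I i).1 (J (e l)).1 - f (I i).1 (J (e l)).2 - f (I i).2 (J (e l)).1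
            + f (I i).2 (J (e l)).2
          = (f (I i).2 (J (e l)).2 - f (I i).2 (J (e l)).1)
            - (f (I i).1 (J (e l)).2 - f (I i).1 (J (e l)).1) := by ring
      rw [hiden]
      have := abs_sub (f (I i).2 (J (e l)).2 - f (I i).2 (J (e l)).1)
        (f (I i).1 (J (e l)).2 - f (I i).1 (J (e l)).1)
      linarith
    calc ∑ l, a i (e l)
        ≤ ∑ l : Fin k, (|fT (J (e l)).2 (I i).1 - fT (J (e l)).1 (I i).1|
          + |fT (J (e l)).2 (I i).2 - fT (J (e l)).1 (I i).2|) :=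
          Finset.sum_le_sum (fun l _ => htri l)
      _ = (∑ l : Fin k, |fT (J (e l)).2 (I i).1 - fT (J (e l)).1 (I i).1|)
          + ∑ l : Fin k, |fT (J (e l)).2 (I i).2 - fT (J (e l)).1 (I i).2| :=
          Finset.sum_add_distrib
      _ ≤ (modV1 fT k).toReal + (modV1 fT k).toReal := by
          apply add_le_add
          · have := sum_le_modV1 fT (hIx i).1 (nonoverlap_comp hJ e) (hfin2 k)
            simpa [Function.comp] using this
          · have := sum_le_modV1 fT (hIx i).2 (nonoverlap_comp hJ e) (hfin2 k)
            simpa [Function.comp] using this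
      _ = 2 * (modV1 fT k).toReal := by ring
  have hmain := mixed_bound n m a hann (fun k => 2 * (modV1 f k).toReal)
      (fun k => 2 * (modV1 fT k).toReal) hv1 hv2
  have hfac1 : ∑ k ∈ Finset.range n,
      Real.sqrt ((fun k => 2 * (modV1 f k).toReal) (k+1) / ((k:ℝ)+1)) * (1/((k:ℝ)+1))
      ≤ Real.sqrt 2 * S1 := by
    calc ∑ k ∈ Finset.range n,
        Real.sqrt ((fun k => 2 * (modV1 f k).toReal) (k+1) / ((k:ℝ)+1)) * (1/((k:ℝ)+1))
        = ∑ k ∈ Finset.range n, Real.sqrt 2 *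
            (Real.sqrt ((modV1 f (k+1)).toReal / ((k:ℝ)+1)) * (1/((k:ℝ)+1))) := by
          apply Finset.sum_congr rfl
          intro k _
          dsimp only
          rw [mul_div_assoc, Real.sqrt_mul (by norm_num : (0:ℝ) ≤ 2)]
          ring
      _ = Real.sqrt 2 * ∑ k ∈ Finset.range n,
            Real.sqrt ((modV1 f (k+1)).toReal / ((k:ℝ)+1)) * (1/((k:ℝ)+1)) := by
          rw [Finset.mul_sum]
      _ ≤ Real.sqrt 2 * S1 :=
          mul_le_mul_of_nonneg_left (partial_sqrt_le f h1 n) (Real.sqrt_nonneg 2)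
  have hfac2 : ∑ k ∈ Finset.range m,
      Real.sqrt ((fun k => 2 * (modV1 fT k).toReal) (k+1) / ((k:ℝ)+1)) * (1/((k:ℝ)+1))
      ≤ Real.sqrt 2 * S2 := by
    calc ∑ k ∈ Finset.range m,
        Real.sqrt ((fun k => 2 * (modV1 fT k).toReal) (k+1) / ((k:ℝ)+1)) * (1/((k:ℝ)+1))
        = ∑ k ∈ Finset.range m, Real.sqrt 2 *
            (Real.sqrt ((modV1 fT (k+1)).toReal / ((k:ℝ)+1)) * (1/((k:ℝ)+1))) := by
          apply Finset.sum_congr rfl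
          intro k _
          dsimp only
          rw [mul_div_assoc, Real.sqrt_mul (by norm_num : (0:ℝ) ≤ 2)]
          ring
      _ = Real.sqrt 2 * ∑ k ∈ Finset.range m,
            Real.sqrt ((modV1 fT (k+1)).toReal / ((k:ℝ)+1)) * (1/((k:ℝ)+1)) := by
          rw [Finset.mul_sum]
      _ ≤ Real.sqrt 2 * S2 :=
          mul_le_mul_of_nonneg_left (partial_sqrt_le fT h2' m) (Real.sqrt_nonneg 2)
  have hfac2nn : 0 ≤ ∑ k ∈ Finset.range m,
      Real.sqrt ((fun k => 2 * (modV1 fT k).toReal) (k+1) / ((k:ℝ)+1)) * (1/((k:ℝ)+1)) := by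
    apply Finset.sum_nonneg
    intro k _
    positivity
  have hS1nn : 0 ≤ Real.sqrt 2 * S1 :=
    mul_nonneg (Real.sqrt_nonneg 2) (by rw [hS1]; exact ENNReal.toReal_nonneg)
  calc ∑ i, ∑ j, a i j / ((((i:ℕ)+1 : ℕ) : ℝ) * (((j:ℕ)+1 : ℕ) : ℝ))
      = ∑ i : Fin n, ∑ j : Fin m, a i j / ((((i:ℕ):ℝ)+1)*(((j:ℕ):ℝ)+1)) := by
        apply Finset.sum_congr rfl
        intro i _
        apply Finset.sum_congr rfl
        intro j _
        push_cast
        ring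
    _ ≤ 4 * ((∑ k ∈ Finset.range n,
          Real.sqrt ((fun k => 2 * (modV1 f k).toReal) (k+1) / ((k:ℝ)+1)) * (1/((k:ℝ)+1)))
        * (∑ k ∈ Finset.range m,
          Real.sqrt ((fun k => 2 * (modV1 fT k).toReal) (k+1) / ((k:ℝ)+1)) * (1/((k:ℝ)+1)))) :=
        hmain
    _ ≤ 4 * ((Real.sqrt 2 * S1) * (Real.sqrt 2 * S2)) := by
        apply mul_le_mul_of_nonneg_left _ (by norm_num : (0:ℝ) ≤ 4)
        exact mul_le_mul hfac1 hfac2 hfac2nn hS1nn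

end DWplumb

/-- if `Σ √(v_j(n,f))/n^{3/2} < ∞` for `j = 1,2`, then `f ∈ HBV`. -/
theorem stmt3 (f : ℝ → ℝ → ℝ) (hper : Periodic2 f)
    (h1 : ∑' n : ℕ, (modV1 f (n + 1)) ^ ((1 : ℝ)/2) / ((n : ℝ≥0∞) + 1) ^ ((3 : ℝ)/2) ≠ ⊤)
    (h2 : ∑' n : ℕ, (modV2 f (n + 1)) ^ ((1 : ℝ)/2) / ((n : ℝ≥0∞) + 1) ^ ((3 : ℝ)/2) ≠ ⊤) :
    HarmonicV f ≠ ⊤ := by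
  set fT : ℝ → ℝ → ℝ := fun x y => f y x with hfT
  have hmod2 : ∀ k, modV2 f k = modV1 fT k := fun k => rfl
  have h2' : ∑' n : ℕ, (modV1 fT (n + 1)) ^ ((1 : ℝ)/2) / ((n : ℝ≥0∞) + 1) ^ ((3 : ℝ)/2) ≠ ⊤ := by
    convert h2 using 2
    rfl
  have hL1 : LamV1 (fun n => (n : ℝ)) f ≠ ⊤ :=
    ne_top_of_le_ne_top ENNReal.ofReal_ne_top (lamV1_le f h1)
  have hL2 : LamV2 (fun n => (n : ℝ)) f ≠ ⊤ := by
    have : LamV2 (fun n => (n : ℝ)) f = LamV1 (fun n => (n : ℝ)) fT := rfl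
    rw [this]
    exact ne_top_of_le_ne_top ENNReal.ofReal_ne_top (lamV1_le fT h2')
  have hL12 : LamV12 (fun n => (n : ℝ)) f ≠ ⊤ :=
    ne_top_of_le_ne_top ENNReal.ofReal_ne_top (lamV12_le f h1 h2')
  unfold HarmonicV
  exact ENNReal.add_ne_top.mpr ⟨ENNReal.add_ne_top.mpr ⟨hL1, hL2⟩, hL12⟩
end
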